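/- arXiv:1011.1521 — 4 statements merged into one kernel-verified Lean document; each statement's English description precedes it below -/
import Mathlib

section
/- For every piecewise C¹ path a : [0,1] → P_n one has L(a) ≥ (4/√n)·|det(g⁻¹a(1))^{1/4} − det(g⁻¹a(0))^{1/4}|. Consequently, for all a₀, a₁ ∈ P_n, d(a₀, a₁) ≥ (4/√n)·|det(g⁻¹a₁)^{1/4} − det(g⁻¹a₀)^{1/4}|. -/
open Matrix Real MeasureTheory Filter
open Topology intervalIntegral

set_option maxHeartbeats 1000000

noncomputable section

/-- The set of real symmetric positive-definite `n × n` matrices. -/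
def Pn (n : ℕ) : Set (Matrix (Fin n) (Fin n) ℝ) := {a | a.PosDef}

/-- `tr_a(b) = tr(a⁻¹ b)`. -/
def trA {n : ℕ} (a b : Matrix (Fin n) (Fin n) ℝ) : ℝ := (a⁻¹ * b).trace

/-- `tr_a(b²) = tr((a⁻¹ b)²)`. -/
def trSq {n : ℕ} (a b : Matrix (Fin n) (Fin n) ℝ) : ℝ := ((a⁻¹ * b) * (a⁻¹ * b)).trace

/-- The `a`-traceless part `b_T = b - (1/n) tr_a(b) a`. -/
def tracelessPart {n : ℕ} (a b : Matrix (Fin n) (Fin n) ℝ) : Matrix (Fin n) (Fin n) ℝ :=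
  b - ((trA a b) / (n : ℝ)) • a

/-- `(det (g⁻¹ a))^{1/4}`. -/
def qdet {n : ℕ} (g a : Matrix (Fin n) (Fin n) ℝ) : ℝ := ((g⁻¹ * a).det) ^ ((1 : ℝ) / 4)

/-- The norm `‖b‖_a = (tr((a⁻¹b)²))^{1/2} (det (g⁻¹ a))^{1/4}`. -/
def fiberNorm {n : ℕ} (g a b : Matrix (Fin n) (Fin n) ℝ) : ℝ :=
  Real.sqrt (trSq a b) * qdet g a

/-- Entrywise derivative of a path of matrices. -/
def pathDeriv {n : ℕ} (γ : ℝ → Matrix (Fin n) (Fin n) ℝ) (t : ℝ) : Matrix (Fin n) (Fin n) ℝ :=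
  Matrix.of fun i j => deriv (fun s => γ s i j) t

/-- A path of matrices is `C¹` on a set if it is entrywise `C¹` there. -/
def C1On {n : ℕ} (γ : ℝ → Matrix (Fin n) (Fin n) ℝ) (s : Set ℝ) : Prop :=
  ∀ i j, ContDiffOn ℝ 1 (fun t => γ t i j) s

/-- `γ` is piecewise `C¹` on `[t₀, t₁]`. -/
def PiecewiseC1On {n : ℕ} (γ : ℝ → Matrix (Fin n) (Fin n) ℝ) (t₀ t₁ : ℝ) : Prop :=
  ContinuousOn γ (Set.Icc t₀ t₁) ∧
  ∃ (k : ℕ) (s : Fin (k + 1) → ℝ), StrictMono s ∧ s 0 = t₀ ∧ s (Fin.last k) = t₁ ∧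
    ∀ i : Fin k, C1On γ (Set.Icc (s i.castSucc) (s i.succ))

/-- Length of a path with respect to the fiber metric determined by `g`. -/
def pathLength {n : ℕ} (g : Matrix (Fin n) (Fin n) ℝ) (γ : ℝ → Matrix (Fin n) (Fin n) ℝ)
    (t₀ t₁ : ℝ) : ℝ :=
  ∫ t in t₀..t₁, fiberNorm g (γ t) (pathDeriv γ t)

/-- The Riemannian distance: the infimum of lengths of piecewise `C¹` paths in `P_n`. -/
def ebinDist {n : ℕ} (g a₀ a₁ : Matrix (Fin n) (Fin n) ℝ) : ℝ :=
  sInf {L : ℝ | ∃ γ : ℝ → Matrix (Fin n) (Fin n) ℝ,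
    PiecewiseC1On γ 0 1 ∧ (∀ t ∈ Set.Icc (0 : ℝ) 1, γ t ∈ Pn n) ∧
    γ 0 = a₀ ∧ γ 1 = a₁ ∧ L = pathLength g γ 0 1}

/-- `a·exp(a⁻¹ b)`, using the matrix exponential. -/
def expAt {n : ℕ} (a b : Matrix (Fin n) (Fin n) ℝ) : Matrix (Fin n) (Fin n) ℝ :=
  a * NormedSpace.exp (a⁻¹ * b)

/-- The explicit geodesic with initial point `a₀` and initial tangent `h`. -/
def geodesicPath {n : ℕ} (a₀ h : Matrix (Fin n) (Fin n) ℝ) (t : ℝ) : Matrix (Fin n) (Fin n) ℝ :=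
  let hT := tracelessPart a₀ h
  let q : ℝ := 1 + t / 4 * trA a₀ h
  let r : ℝ := t / 4 * Real.sqrt ((n : ℝ) * trSq a₀ hT)
  if hT = 0 then (q ^ ((4 : ℝ) / n)) • a₀
  else ((q ^ 2 + r ^ 2) ^ ((2 : ℝ) / n)) •
    (a₀ * NormedSpace.exp
      ((4 * Complex.arg ⟨q, r⟩ / Real.sqrt ((n : ℝ) * trSq a₀ hT)) • (a₀⁻¹ * hT)))

/-- The inverse `ψ` of the Riemannian exponential mapping based at `a₀`. -/
def psiMap {n : ℕ} (a₀ b : Matrix (Fin n) (Fin n) ℝ) : Matrix (Fin n) (Fin n) ℝ :=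
  let bT := tracelessPart a₀ b
  let ω : ℝ := Real.sqrt ((n : ℝ) * trSq a₀ bT) / 4
  if bT = 0 then ((4 / (n : ℝ)) * (Real.exp (trA a₀ b / 4) - 1)) • a₀
  else ((4 / (n : ℝ)) * (Real.exp (trA a₀ b / 4) * Real.cos ω - 1)) • a₀ +
    ((4 / Real.sqrt ((n : ℝ) * trSq a₀ bT)) * Real.exp (trA a₀ b / 4) * Real.sin ω) • bT

section AuxProof

noncomputable def detCM (n : ℕ) : ContinuousMultilinearMap ℝ (fun _ : Fin n => (Fin n → ℝ)) ℝ :=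
  { toMultilinearMap := (Matrix.detRowAlternating :
      (Fin n → ℝ) [⋀^Fin n]→ₗ[ℝ] ℝ).toMultilinearMap,
    cont := by
      have h : Continuous fun (v : Fin n → Fin n → ℝ) => (Matrix.of v).det :=
        Continuous.matrix_det (continuous_id)
      exact h }

lemma detCM_apply {n : ℕ} (v : Fin n → Fin n → ℝ) : detCM n v = (Matrix.of v).det := rfl

lemma det_hasDerivAt_raw {n : ℕ} {γ : ℝ → Matrix (Fin n) (Fin n) ℝ}
    {b : Matrix (Fin n) (Fin n) ℝ} {t : ℝ}
    (h : ∀ i j, HasDerivAt (fun s => γ s i j) (b i j) t) :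
    HasDerivAt (fun s => (γ s).det) (∑ i, ((γ t).updateRow i (b i)).det) t := by
  have hf : HasDerivAt (fun s => (fun i j => γ s i j : Fin n → Fin n → ℝ))
      (fun i j => b i j) t :=
    hasDerivAt_pi.2 fun i => hasDerivAt_pi.2 fun j => h i j
  have hd := ((detCM n).hasFDerivAt (x := fun i j => γ t i j)).comp_hasDerivAt t hf
  refine hd.congr_deriv ?_
  rw [ContinuousMultilinearMap.linearDeriv_apply]
  rfl



lemma det_updateRow_sum' {n : ℕ} (A : Matrix (Fin n) (Fin n) ℝ) (i : Fin n)
    (c : Fin n → ℝ) (v : Fin n → Fin n → ℝ) :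
    (A.updateRow i (∑ j, c j • v j)).det = ∑ j, c j * (A.updateRow i (v j)).det := by
  have h := map_sum ((Matrix.detRowAlternating :
      (Fin n → ℝ) [⋀^Fin n]→ₗ[ℝ] ℝ).toMultilinearMap.toLinearMap A i)
      (fun j => c j • v j) Finset.univ
  simp only [MultilinearMap.toLinearMap_apply, _root_.map_smul, smul_eq_mul] at h
  exact h

lemma single_sum {n : ℕ} (b : Fin n → ℝ) :
    b = ∑ j, b j • (Pi.single j (1:ℝ) : Fin n → ℝ) := by
  have : ∀ j, b j • (Pi.single j (1:ℝ) : Fin n → ℝ) = Pi.single j (b j) := by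
    intro j; rw [← Pi.single_smul, smul_eq_mul, mul_one]
  simp_rw [this]
  exact (Finset.univ_sum_single b).symm

lemma sum_det_updateRow {n : ℕ} (A B : Matrix (Fin n) (Fin n) ℝ) (hA : A.det ≠ 0) :
    ∑ i, (A.updateRow i (B i)).det = A.det * (A⁻¹ * B).trace := by
  have h1 : ∀ i, (A.updateRow i (B i)).det = ∑ j, B i j * (adjugate A) j i := by
    intro i
    calc (A.updateRow i (B i)).det
        = (A.updateRow i (∑ j, B i j • (Pi.single j (1:ℝ) : Fin n → ℝ))).det := by
          rw [← single_sum (B i)]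
      _ = ∑ j, B i j * (A.updateRow i (Pi.single j 1)).det := det_updateRow_sum' ..
      _ = ∑ j, B i j * (adjugate A) j i := by simp_rw [adjugate_apply]
  simp_rw [h1]
  have h2 : A.det * (A⁻¹ * B).trace = ((A.det • A⁻¹) * B).trace := by
    rw [smul_mul, trace_smul, smul_eq_mul]
  have h3 : A.det • A⁻¹ = adjugate A := by
    rw [Matrix.inv_def, Ring.inverse_eq_inv, smul_smul, mul_inv_cancel₀ hA, one_smul]
  rw [h2, h3, Matrix.trace]
  simp_rw [Matrix.diag_apply, Matrix.mul_apply]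
  rw [Finset.sum_comm]
  congr 1; ext i; congr 1; ext j; ring



lemma abs_trace_le_of_symm {n : ℕ} {S : Matrix (Fin n) (Fin n) ℝ} (hS : Sᵀ = S) :
    |S.trace| ≤ Real.sqrt n * Real.sqrt ((S * S).trace) := by
  have htr : S.trace = ∑ i, S i i := rfl
  have htr2 : (S * S).trace = ∑ i, ∑ j, (S i j) ^ 2 := by
    rw [Matrix.trace]
    congr 1; ext i
    rw [Matrix.diag_apply, Matrix.mul_apply]
    congr 1; ext j
    have h : S j i = S i j := by
      have := congrFun (congrFun hS i) j
      simpa [Matrix.transpose_apply] using this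
    rw [h]; ring
  have h1 : S.trace ^ 2 ≤ (n : ℝ) * ∑ i, (S i i) ^ 2 := by
    rw [htr]
    simpa using sq_sum_le_card_mul_sum_sq (s := Finset.univ) (f := fun i => S i i)
  have h2 : ∑ i, (S i i) ^ 2 ≤ ∑ i, ∑ j, (S i j) ^ 2 := by
    refine Finset.sum_le_sum fun i _ => ?_
    exact Finset.single_le_sum (f := fun j => (S i j)^2) (fun j _ => sq_nonneg _) (Finset.mem_univ i)
  have h3 : S.trace ^ 2 ≤ (n : ℝ) * (S * S).trace := by
    rw [htr2]
    exact h1.trans (by nlinarith [Nat.cast_nonneg (α := ℝ) n])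
  calc |S.trace| = Real.sqrt (S.trace ^ 2) := (Real.sqrt_sq_eq_abs _).symm
    _ ≤ Real.sqrt ((n : ℝ) * (S * S).trace) := Real.sqrt_le_sqrt h3
    _ = Real.sqrt n * Real.sqrt ((S * S).trace) := Real.sqrt_mul (Nat.cast_nonneg n) _

lemma abs_trA_le {n : ℕ} {a b : Matrix (Fin n) (Fin n) ℝ} (ha : a.PosDef) (hb : bᵀ = b) :
    |(a⁻¹ * b).trace| ≤ Real.sqrt n * Real.sqrt (((a⁻¹ * b) * (a⁻¹ * b)).trace) := by
  have hainv : (a⁻¹).PosDef := ha.inv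
  obtain ⟨c, hcsym, hc2⟩ : ∃ c : Matrix (Fin n) (Fin n) ℝ, cᵀ = c ∧ c * c = a⁻¹ := by
    open scoped MatrixOrder in
    obtain ⟨X, hX, -, h⟩ :=
      CFC.exists_sqrt_of_isSelfAdjoint_of_quasispectrumRestricts hainv.posSemidef.isHermitian
        (QuasispectrumRestricts.nnreal_of_nonneg hainv.posSemidef.nonneg)
    exact ⟨X, hX.star_eq, h⟩
  have hSsym : (c * b * c)ᵀ = c * b * c := by
    rw [Matrix.transpose_mul, Matrix.transpose_mul, hcsym, hb, mul_assoc]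
  have e1 : (a⁻¹ * b).trace = (c * b * c).trace := by
    rw [← hc2, mul_assoc, trace_mul_comm, mul_assoc]
  have e2 : ((a⁻¹ * b) * (a⁻¹ * b)).trace = ((c * b * c) * (c * b * c)).trace := by
    rw [← hc2]
    rw [show c * c * b * (c * c * b) = c * (c * b * c * c * b) by simp only [mul_assoc]]
    rw [trace_mul_comm]
    congr 1
    simp only [mul_assoc]
  rw [e1, e2]
  exact abs_trace_le_of_symm hSsym

section Piece
variable {n : ℕ}


lemma contOn_entry {α : Type*} [TopologicalSpace α] {A : α → Matrix (Fin n) (Fin n) ℝ}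
    {s : Set α} (h : ContinuousOn A s) (i j : Fin n) :
    ContinuousOn (fun x => A x i j) s := by
  have h2 := ((continuous_apply j).comp (continuous_apply i)).comp_continuousOn h
  exact h2

lemma contOn_matrix {α : Type*} [TopologicalSpace α] {A : α → Matrix (Fin n) (Fin n) ℝ}
    {s : Set α} (h : ∀ i j, ContinuousOn (fun x => A x i j) s) : ContinuousOn A s := by
  apply continuousOn_pi.2; intro i; apply continuousOn_pi.2; intro j; exact h i j

lemma contOn_mul {α : Type*} [TopologicalSpace α] {A B : α → Matrix (Fin n) (Fin n) ℝ}
    {s : Set α} (hA : ContinuousOn A s) (hB : ContinuousOn B s) :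
    ContinuousOn (fun x => A x * B x) s := by
  apply contOn_matrix; intro i j
  have : ∀ x, (A x * B x) i j = ∑ k, A x i k * B x k j := fun x => Matrix.mul_apply
  simp only [this]
  exact continuousOn_finset_sum _ fun k _ => (contOn_entry hA i k).mul (contOn_entry hB k j)

lemma contOn_trace {α : Type*} [TopologicalSpace α] {A : α → Matrix (Fin n) (Fin n) ℝ}
    {s : Set α} (hA : ContinuousOn A s) : ContinuousOn (fun x => (A x).trace) s := by
  have : ∀ x, (A x).trace = ∑ i, A x i i := fun x => rfl
  simp only [this]
  exact continuousOn_finset_sum _ fun k _ => contOn_entry hA k k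

/-- continuity of inverse along a continuous posdef path -/
lemma contOn_inv {γ : ℝ → Matrix (Fin n) (Fin n) ℝ} {s : Set ℝ}
    (hγ : ContinuousOn γ s) (hpos : ∀ t ∈ s, (γ t).PosDef) :
    ContinuousOn (fun t => (γ t)⁻¹) s := by
  have hdet : ContinuousOn (fun t => (γ t).det) s :=
    (Continuous.matrix_det continuous_id).comp_continuousOn hγ
  have hadj : ContinuousOn (fun t => (γ t).adjugate) s :=
    (Continuous.matrix_adjugate continuous_id).comp_continuousOn hγ
  have h : ContinuousOn (fun t => ((γ t).det)⁻¹ • (γ t).adjugate) s :=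
    (hdet.inv₀ (fun t ht => (hpos t ht).det_pos.ne')).smul hadj
  refine h.congr fun t ht => ?_
  rw [Matrix.inv_def, Ring.inverse_eq_inv]


lemma contOn_qdet {g : Matrix (Fin n) (Fin n) ℝ}
    {γ : ℝ → Matrix (Fin n) (Fin n) ℝ} {s : Set ℝ} (hγ : ContinuousOn γ s) :
    ContinuousOn (fun t => qdet g (γ t)) s := by
  have hdet : ContinuousOn (fun t => (g⁻¹ * γ t).det) s :=
    (Continuous.matrix_det continuous_id).comp_continuousOn (contOn_mul continuousOn_const hγ)
  exact hdet.rpow_const fun t ht => Or.inr (by norm_num)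

lemma contOn_fiberNorm {g : Matrix (Fin n) (Fin n) ℝ}
    {γ δ : ℝ → Matrix (Fin n) (Fin n) ℝ} {s : Set ℝ}
    (hγ : ContinuousOn γ s) (hδ : ContinuousOn δ s) (hpos : ∀ t ∈ s, (γ t).PosDef) :
    ContinuousOn (fun t => fiberNorm g (γ t) (δ t)) s := by
  have hinv := contOn_inv hγ hpos
  have hmul : ContinuousOn (fun t => (γ t)⁻¹ * δ t) s := contOn_mul hinv hδ
  have htrsq : ContinuousOn (fun t => trSq (γ t) (δ t)) s := contOn_trace (contOn_mul hmul hmul)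
  exact (Real.continuous_sqrt.comp_continuousOn htrsq).mul (contOn_qdet hγ)

lemma contOn_G {g : Matrix (Fin n) (Fin n) ℝ}
    {γ δ : ℝ → Matrix (Fin n) (Fin n) ℝ} {s : Set ℝ}
    (hγ : ContinuousOn γ s) (hδ : ContinuousOn δ s) (hpos : ∀ t ∈ s, (γ t).PosDef) :
    ContinuousOn (fun t => 1 / 4 * trA (γ t) (δ t) * qdet g (γ t)) s := by
  have hinv := contOn_inv hγ hpos
  have htra : ContinuousOn (fun t => trA (γ t) (δ t)) s := contOn_trace (contOn_mul hinv hδ)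
  exact (continuousOn_const.mul htra).mul (contOn_qdet hγ)



lemma qdet_pos {g a : Matrix (Fin n) (Fin n) ℝ} (hg : g.PosDef) (ha : a.PosDef) :
    0 < qdet g a := by
  apply Real.rpow_pos_of_pos
  rw [det_mul, Matrix.det_nonsing_inv, Ring.inverse_eq_inv]
  exact mul_pos (inv_pos.2 hg.det_pos) ha.det_pos

lemma piece_bound (hn : 1 ≤ n) {g : Matrix (Fin n) (Fin n) ℝ} (hg : g.PosDef)
    {γ : ℝ → Matrix (Fin n) (Fin n) ℝ} {a b : ℝ} (hab : a < b)
    (hsub : Set.Icc a b ⊆ Set.Icc 0 1)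
    (hcont : ContinuousOn γ (Set.Icc 0 1))
    (hpos : ∀ t ∈ Set.Icc (0:ℝ) 1, (γ t).PosDef)
    (hC1 : C1On γ (Set.Icc a b)) :
    IntervalIntegrable (fun t => fiberNorm g (γ t) (pathDeriv γ t)) volume a b ∧
    4 / Real.sqrt n * |qdet g (γ b) - qdet g (γ a)| ≤
      ∫ t in a..b, fiberNorm g (γ t) (pathDeriv γ t) := by
  have hsn : (0:ℝ) < Real.sqrt n := Real.sqrt_pos.2 (by exact_mod_cast hn)
  have hγab : ContinuousOn γ (Set.Icc a b) := hcont.mono hsub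
  have hposab : ∀ t ∈ Set.Icc a b, (γ t).PosDef := fun t ht => hpos t (hsub ht)
  have ha0 : (0:ℝ) ≤ a := (hsub (Set.left_mem_Icc.2 hab.le)).1
  have hb1 : b ≤ 1 := (hsub (Set.right_mem_Icc.2 hab.le)).2
  set dw : ℝ → Matrix (Fin n) (Fin n) ℝ :=
    fun t => Matrix.of fun i j => derivWithin (fun s => γ s i j) (Set.Icc a b) t with hdw_def
  have hdw_cont : ContinuousOn dw (Set.Icc a b) := by
    apply contOn_matrix
    intro i j
    exact (hC1 i j).continuousOn_derivWithin (uniqueDiffOn_Icc hab) le_rfl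
  have hIoo_mem : ∀ t ∈ Set.Ioo a b, Set.Icc a b ∈ 𝓝 t := fun t ht => Icc_mem_nhds ht.1 ht.2
  have hdiff : ∀ t ∈ Set.Ioo a b, ∀ i j, HasDerivAt (fun s => γ s i j) (pathDeriv γ t i j) t := by
    intro t ht i j
    have hd : DifferentiableWithinAt ℝ (fun s => γ s i j) (Set.Icc a b) t :=
      ((hC1 i j).differentiableOn one_ne_zero) t (Set.Ioo_subset_Icc_self ht)
    exact (hd.differentiableAt (hIoo_mem t ht)).hasDerivAt
  have hdw_eq : ∀ t ∈ Set.Ioo a b, pathDeriv γ t = dw t := by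
    intro t ht; ext i j
    exact (derivWithin_of_mem_nhds (hIoo_mem t ht)).symm
  have hsymm : ∀ t ∈ Set.Ioo a b, (pathDeriv γ t)ᵀ = pathDeriv γ t := by
    intro t ht; ext i j
    show deriv (fun s => γ s j i) t = deriv (fun s => γ s i j) t
    apply Filter.EventuallyEq.deriv_eq
    have hmem : Set.Ioo (0:ℝ) 1 ∈ 𝓝 t :=
      Ioo_mem_nhds (lt_of_le_of_lt ha0 ht.1) (lt_of_lt_of_le ht.2 hb1)
    filter_upwards [hmem] with s hs
    have hh := (hpos s (Set.Ioo_subset_Icc_self hs)).isHermitian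
    rw [Matrix.IsHermitian, conjTranspose_eq_transpose_of_trivial] at hh
    simpa using congrFun (congrFun hh i) j
  -- derivative of qdet along the path
  have hder : ∀ t ∈ Set.Ioo a b, HasDerivAt (fun s => qdet g (γ s))
      (1 / 4 * trA (γ t) (pathDeriv γ t) * qdet g (γ t)) t := by
    intro t ht
    have htIcc : t ∈ Set.Icc (0:ℝ) 1 := hsub (Set.Ioo_subset_Icc_self ht)
    have hγdet_pos : 0 < (γ t).det := (hpos t htIcc).det_pos
    have hDdet : HasDerivAt (fun s => (γ s).det)
        ((γ t).det * ((γ t)⁻¹ * pathDeriv γ t).trace) t := by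
      have h1 := det_hasDerivAt_raw (fun i j => hdiff t ht i j)
      rwa [sum_det_updateRow _ _ hγdet_pos.ne'] at h1
    set c := (g⁻¹).det with hc
    have hcpos : 0 < c := by
      rw [hc, Matrix.det_nonsing_inv, Ring.inverse_eq_inv]
      exact inv_pos.2 hg.det_pos
    have hqdet_eq : ∀ s, qdet g (γ s) = (c * (γ s).det) ^ ((1:ℝ)/4) := by
      intro s; rw [qdet, det_mul]
    have hu : HasDerivAt (fun s => c * (γ s).det)
        (c * ((γ t).det * ((γ t)⁻¹ * pathDeriv γ t).trace)) t := hDdet.const_mul c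
    have hupos : 0 < c * (γ t).det := mul_pos hcpos hγdet_pos
    have hr := (Real.hasDerivAt_rpow_const (x := c * (γ t).det) (p := (1:ℝ)/4)
      (Or.inl hupos.ne')).comp t hu
    have heq : (fun s => qdet g (γ s)) = fun s => (c * (γ s).det) ^ ((1:ℝ)/4) :=
      funext hqdet_eq
    rw [heq]
    refine hr.congr_deriv (Eq.symm ?_)
    rw [hqdet_eq, trA]
    have hu1 : (c * (γ t).det) ^ ((1:ℝ)/4 - 1) * (c * (γ t).det)
        = (c * (γ t).det) ^ ((1:ℝ)/4) := by
      rw [← Real.rpow_add_one hupos.ne']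
      norm_num
    set T := ((γ t)⁻¹ * pathDeriv γ t).trace
    calc 1 / 4 * T * (c * (γ t).det) ^ ((1:ℝ)/4)
        = 1 / 4 * T * ((c * (γ t).det) ^ ((1:ℝ)/4 - 1) * (c * (γ t).det)) := by rw [hu1]
      _ = (1:ℝ)/4 * (c * (γ t).det) ^ ((1:ℝ)/4 - 1) * (c * ((γ t).det * T)) := by ring
      _ = _ := by simp [Function.comp]
  -- integrability
  have hI_ae : ∀ᵐ t ∂volume.restrict (Set.Ioc a b), t ∈ Set.Ioo a b := by
    rw [← MeasureTheory.Measure.restrict_congr_set Ioo_ae_eq_Ioc]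
    exact ae_restrict_mem measurableSet_Ioo
  have hIcc_ae : ∀ᵐ t ∂volume.restrict (Set.Icc a b), t ∈ Set.Ioo a b := by
    rw [← MeasureTheory.Measure.restrict_congr_set Ioo_ae_eq_Icc]
    exact ae_restrict_mem measurableSet_Ioo
  have hIw_int : IntervalIntegrable (fun t => fiberNorm g (γ t) (dw t)) volume a b :=
    (contOn_fiberNorm hγab hdw_cont hposab).intervalIntegrable_of_Icc hab.le
  have hG_int : IntervalIntegrable (fun t => 1 / 4 * trA (γ t) (dw t) * qdet g (γ t)) volume a b :=
    (contOn_G hγab hdw_cont hposab).intervalIntegrable_of_Icc hab.le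
  have hI_int : IntervalIntegrable (fun t => fiberNorm g (γ t) (pathDeriv γ t)) volume a b := by
    rw [intervalIntegrable_iff_integrableOn_Ioc_of_le hab.le] at hIw_int ⊢
    refine hIw_int.congr ?_
    filter_upwards [hI_ae] with t ht
    rw [hdw_eq t ht]
  have hf'_int : IntervalIntegrable
      (fun t => 1 / 4 * trA (γ t) (pathDeriv γ t) * qdet g (γ t)) volume a b := by
    rw [intervalIntegrable_iff_integrableOn_Ioc_of_le hab.le] at hG_int ⊢
    refine hG_int.congr ?_
    filter_upwards [hI_ae] with t ht
    rw [hdw_eq t ht]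
  refine ⟨hI_int, ?_⟩
  -- FTC
  have hFcont : ContinuousOn (fun t => qdet g (γ t)) (Set.Icc a b) := contOn_qdet hγab
  have hFTC : (∫ t in a..b, 1 / 4 * trA (γ t) (pathDeriv γ t) * qdet g (γ t))
      = qdet g (γ b) - qdet g (γ a) :=
    integral_eq_sub_of_hasDeriv_right_of_le hab.le hFcont
      (fun t ht => (hder t ht).hasDerivWithinAt) hf'_int
  -- pointwise bound
  have hpt : ∀ t ∈ Set.Ioo a b,
      |1 / 4 * trA (γ t) (pathDeriv γ t) * qdet g (γ t)|
        ≤ Real.sqrt n / 4 * fiberNorm g (γ t) (pathDeriv γ t) := by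
    intro t ht
    have htIcc : t ∈ Set.Icc (0:ℝ) 1 := hsub (Set.Ioo_subset_Icc_self ht)
    have hq : 0 < qdet g (γ t) := qdet_pos hg (hpos t htIcc)
    have hcs := abs_trA_le (hpos t htIcc) (hsymm t ht)
    rw [abs_mul, abs_mul]
    have h14 : |(1:ℝ)/4| = 1/4 := by norm_num
    rw [h14, abs_of_pos hq]
    rw [fiberNorm]
    calc 1/4 * |trA (γ t) (pathDeriv γ t)| * qdet g (γ t)
        ≤ 1/4 * (Real.sqrt n * Real.sqrt (trSq (γ t) (pathDeriv γ t))) * qdet g (γ t) := by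
          have : |trA (γ t) (pathDeriv γ t)|
              ≤ Real.sqrt n * Real.sqrt (trSq (γ t) (pathDeriv γ t)) := hcs
          gcongr
      _ = Real.sqrt n / 4 * (Real.sqrt (trSq (γ t) (pathDeriv γ t)) * qdet g (γ t)) := by ring
  -- combine
  have habs : |qdet g (γ b) - qdet g (γ a)|
      ≤ ∫ t in a..b, Real.sqrt n / 4 * fiberNorm g (γ t) (pathDeriv γ t) := by
    rw [← hFTC]
    refine (abs_integral_le_integral_abs hab.le).trans ?_
    refine integral_mono_ae_restrict hab.le hf'_int.abs (hI_int.const_mul _) ?_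
    filter_upwards [hIcc_ae] with t ht
    exact hpt t ht
  rw [intervalIntegral.integral_const_mul] at habs
  have key : 4 / Real.sqrt n * |qdet g (γ b) - qdet g (γ a)|
      ≤ 4 / Real.sqrt n * (Real.sqrt n / 4 * ∫ t in a..b, fiberNorm g (γ t) (pathDeriv γ t)) := by
    gcongr
  calc 4 / Real.sqrt n * |qdet g (γ b) - qdet g (γ a)|
      ≤ 4 / Real.sqrt n * (Real.sqrt n / 4 * ∫ t in a..b, fiberNorm g (γ t) (pathDeriv γ t)) := key
    _ = ∫ t in a..b, fiberNorm g (γ t) (pathDeriv γ t) := by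
        field_simp

lemma posDef_smul {n : ℕ} {A : Matrix (Fin n) (Fin n) ℝ} {c : ℝ} (hc : 0 < c)
    (hA : A.PosDef) : (c • A).PosDef := by
  exact hA.smul hc

lemma line_posDef {n : ℕ} {a₀ a₁ : Matrix (Fin n) (Fin n) ℝ} (h₀ : a₀.PosDef)
    (h₁ : a₁.PosDef) {t : ℝ} (ht : t ∈ Set.Icc (0:ℝ) 1) :
    (a₀ + t • (a₁ - a₀)).PosDef := by
  have heq : a₀ + t • (a₁ - a₀) = (1 - t) • a₀ + t • a₁ := by
    rw [smul_sub, sub_smul, one_smul]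
    abel
  rw [heq]
  rcases eq_or_lt_of_le ht.1 with h0 | h0
  · simp [← h0, h₀]
  rcases eq_or_lt_of_le ht.2 with h1 | h1
  · simp [h1, h₁]
  · exact (posDef_smul (by linarith) h₀).add (posDef_smul h0 h₁)

lemma line_C1 {n : ℕ} (a₀ a₁ : Matrix (Fin n) (Fin n) ℝ) (i j : Fin n) (s : Set ℝ) :
    ContDiffOn ℝ 1 (fun t => (a₀ + t • (a₁ - a₀)) i j) s := by
  have : (fun t => (a₀ + t • (a₁ - a₀)) i j)
      = fun t => a₀ i j + t * (a₁ i j - a₀ i j) := by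
    funext t
    simp [Matrix.add_apply, Matrix.smul_apply, Matrix.sub_apply, smul_eq_mul, mul_sub]
  rw [this]
  exact (contDiff_const.add (contDiff_id.mul contDiff_const)).contDiffOn

end Piece

end AuxProof

/-- lower bound for lengths and distance via fourth roots of determinants. -/
theorem stmt_0 (n : ℕ) (hn : 1 ≤ n) (g : Matrix (Fin n) (Fin n) ℝ) (hg : g ∈ Pn n) :
    (∀ γ : ℝ → Matrix (Fin n) (Fin n) ℝ, PiecewiseC1On γ 0 1 →
      (∀ t ∈ Set.Icc (0 : ℝ) 1, γ t ∈ Pn n) →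
      pathLength g γ 0 1 ≥ 4 / Real.sqrt n * |qdet g (γ 1) - qdet g (γ 0)|) ∧
    ∀ a₀ ∈ Pn n, ∀ a₁ ∈ Pn n,
      ebinDist g a₀ a₁ ≥ 4 / Real.sqrt n * |qdet g a₁ - qdet g a₀| := by
  have hsn : (0:ℝ) < Real.sqrt n := Real.sqrt_pos.2 (by exact_mod_cast hn)
  have part1 : ∀ γ : ℝ → Matrix (Fin n) (Fin n) ℝ, PiecewiseC1On γ 0 1 →
      (∀ t ∈ Set.Icc (0 : ℝ) 1, γ t ∈ Pn n) →
      pathLength g γ 0 1 ≥ 4 / Real.sqrt n * |qdet g (γ 1) - qdet g (γ 0)| := by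
    intro γ hpc hmem
    obtain ⟨hcont, k, s, hmono, hs0, hsl, hC1⟩ := hpc
    have hpos : ∀ t ∈ Set.Icc (0:ℝ) 1, (γ t).PosDef := hmem
    set I : ℝ → ℝ := fun t => fiberNorm g (γ t) (pathDeriv γ t) with hI_def
    set a : ℕ → ℝ := fun i => s ⟨min i k, Nat.lt_succ_of_le (min_le_right i k)⟩ with ha_def
    have ha : ∀ i (hi : i ≤ k), a i = s ⟨i, Nat.lt_succ_of_le hi⟩ := by
      intro i hi
      exact congrArg s (Fin.ext (min_eq_left hi))
    have ha0 : a 0 = 0 := by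
      rw [ha 0 (Nat.zero_le k), ← hs0]
      exact congrArg s (Fin.ext (by simp))
    have hak : a k = 1 := by
      rw [ha k le_rfl, ← hsl]
      exact congrArg s (Fin.ext (by simp [Fin.last]))
    have hpieces : ∀ i, i < k → IntervalIntegrable I volume (a i) (a (i+1)) ∧
        4 / Real.sqrt n * |qdet g (γ (a (i+1))) - qdet g (γ (a i))| ≤
          ∫ t in a i..a (i+1), I t := by
      intro i hik
      have hai : a i = s ⟨i, Nat.lt_succ_of_le hik.le⟩ := ha i hik.le
      have hai1 : a (i+1) = s ⟨i+1, Nat.lt_succ_of_le hik⟩ := ha (i+1) hik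
      have hlt : a i < a (i+1) := by
        rw [hai, hai1]
        exact hmono (by simp [Fin.lt_def])
      have hsub : Set.Icc (a i) (a (i+1)) ⊆ Set.Icc (0:ℝ) 1 := by
        intro t ht
        refine ⟨le_trans ?_ ht.1, le_trans ht.2 ?_⟩
        · rw [← hs0, hai]
          exact hmono.monotone (by simp [Fin.le_def])
        · rw [← hsl, hai1]
          exact hmono.monotone (by simp [Fin.le_def, Fin.last]; omega)
      have hC1' : C1On γ (Set.Icc (a i) (a (i+1))) := by
        have h := hC1 ⟨i, hik⟩
        have e1 : s (Fin.castSucc ⟨i, hik⟩) = a i := by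
          rw [hai]; exact congrArg s (Fin.ext rfl)
        have e2 : s (Fin.succ ⟨i, hik⟩) = a (i+1) := by
          rw [hai1]; exact congrArg s (Fin.ext rfl)
        rwa [e1, e2] at h
      exact piece_bound hn hg hlt hsub hcont hpos hC1'
    have hsum := intervalIntegral.sum_integral_adjacent_intervals (μ := volume) (f := I)
      (a := a) (fun i hik => (hpieces i hik).1)
    have hlen : pathLength g γ 0 1 = ∑ i ∈ Finset.range k, ∫ t in a i..a (i+1), I t := by
      rw [pathLength, hsum, ha0, hak]
    rw [ge_iff_le, hlen]
    calc 4 / Real.sqrt n * |qdet g (γ 1) - qdet g (γ 0)|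
        = 4 / Real.sqrt n *
          |∑ i ∈ Finset.range k, (qdet g (γ (a (i+1))) - qdet g (γ (a i)))| := by
          rw [Finset.sum_range_sub (fun i => qdet g (γ (a i))), ha0, hak]
      _ ≤ 4 / Real.sqrt n *
          ∑ i ∈ Finset.range k, |qdet g (γ (a (i+1))) - qdet g (γ (a i))| := by
          have h4 : (0:ℝ) ≤ 4 / Real.sqrt n := by positivity
          exact mul_le_mul_of_nonneg_left (Finset.abs_sum_le_sum_abs _ _) h4
      _ = ∑ i ∈ Finset.range k,
          4 / Real.sqrt n * |qdet g (γ (a (i+1))) - qdet g (γ (a i))| := by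
          rw [Finset.mul_sum]
      _ ≤ ∑ i ∈ Finset.range k, ∫ t in a i..a (i+1), I t :=
          Finset.sum_le_sum fun i hi => (hpieces i (Finset.mem_range.1 hi)).2
  refine ⟨part1, ?_⟩
  intro a₀ h₀ a₁ h₁
  have h₀' : a₀.PosDef := h₀
  have h₁' : a₁.PosDef := h₁
  set δ : ℝ → Matrix (Fin n) (Fin n) ℝ := fun t => a₀ + t • (a₁ - a₀) with hδ_def
  have hδ0 : δ 0 = a₀ := by simp [hδ_def]
  have hδ1 : δ 1 = a₁ := by simp [hδ_def]
  have hδmem : ∀ t ∈ Set.Icc (0:ℝ) 1, δ t ∈ Pn n := fun t ht => line_posDef h₀' h₁' ht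
  have hδpc : PiecewiseC1On δ 0 1 := by
    refine ⟨?_, 1, fun i => ((i : ℕ) : ℝ), ?_, by simp, by simp [Fin.last], ?_⟩
    · exact (continuous_const.add (continuous_id.smul continuous_const)).continuousOn
    · intro i j hij
      simpa using (Nat.cast_lt (α := ℝ)).2 (Fin.lt_iff_val_lt_val.1 hij)
    · intro i
      intro p q
      exact line_C1 a₀ a₁ p q _
  refine le_csInf ⟨pathLength g δ 0 1, δ, hδpc, hδmem, hδ0, hδ1, rfl⟩ ?_
  rintro L ⟨γ, hpc, hmem, h0, h1, rfl⟩
  have := part1 γ hpc hmem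
  rwa [h0, h1] at this

end
end

section
/- For a₁ ∈ P_n and 0 < ε ≤ 1, the radial path t ↦ t·a₁ on the interval [ε,1] is a C¹ path in P_n whose length equals (4/√n)·(1 − ε^{n/4})·(det(g⁻¹a₁))^{1/4}. In particular d(ε·a₁, a₁) ≤ (4/√n)·(1 − ε^{n/4})·(det(g⁻¹a₁))^{1/4}, and these lengths tend to (4/√n)·(det(g⁻¹a₁))^{1/4} as ε → 0. -/
open Matrix Real MeasureTheory Filter

noncomputable section

lemma aux_posdef_smul {n : ℕ} {a : Matrix (Fin n) (Fin n) ℝ} (ha : a.PosDef) {t : ℝ}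
    (ht : 0 < t) : (t • a).PosDef := by
  refine ⟨?_, fun x hx => ?_⟩
  · rw [Matrix.IsHermitian, Matrix.conjTranspose_smul, ha.1.eq, star_trivial]
  · exact (ha.smul ht).2 hx

lemma aux_det_pos {n : ℕ} {g a : Matrix (Fin n) (Fin n) ℝ} (hg : g.PosDef) (ha : a.PosDef) :
    0 < (g⁻¹ * a).det := by
  rw [Matrix.det_mul, Matrix.det_nonsing_inv, Ring.inverse_eq_inv']
  exact mul_pos (inv_pos.2 hg.det_pos) ha.det_pos

lemma aux_qdet_nonneg {n : ℕ} {g a : Matrix (Fin n) (Fin n) ℝ} (hg : g.PosDef) (ha : a.PosDef) :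
    0 ≤ qdet g a := Real.rpow_nonneg (aux_det_pos hg ha).le _

lemma aux_pathDeriv {n : ℕ} (a₁ : Matrix (Fin n) (Fin n) ℝ) (c m t : ℝ) :
    pathDeriv (fun s : ℝ => (c + m * s) • a₁) t = m • a₁ := by
  ext i j
  show deriv (fun s : ℝ => (c + m * s) * a₁ i j) t = m * a₁ i j
  have h : HasDerivAt (fun s : ℝ => (c + m * s) * a₁ i j) (m * a₁ i j) t := by
    have h1 : HasDerivAt (fun s : ℝ => c + m * s) m t := by
      simpa using ((hasDerivAt_id t).const_mul m).const_add c
    simpa using h1.mul_const (a₁ i j)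
  rw [h.deriv]

lemma aux_qdet_smul {n : ℕ} {g a : Matrix (Fin n) (Fin n) ℝ} (hg : g.PosDef) (ha : a.PosDef)
    {s : ℝ} (hs : 0 ≤ s) : qdet g (s • a) = s ^ ((n : ℝ) / 4) * qdet g a := by
  unfold qdet
  rw [Matrix.mul_smul, Matrix.det_smul, Fintype.card_fin,
    Real.mul_rpow (pow_nonneg hs _) (aux_det_pos hg ha).le,
    ← Real.rpow_natCast s n, ← Real.rpow_mul hs, mul_one_div]

lemma aux_fiberNorm {n : ℕ} {g a : Matrix (Fin n) (Fin n) ℝ} (hg : g.PosDef) (ha : a.PosDef)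
    {s m : ℝ} (hs : 0 < s) (hm : 0 ≤ m) :
    fiberNorm g (s • a) (m • a) = Real.sqrt n * m * s ^ ((n : ℝ) / 4 - 1) * qdet g a := by
  have hda : IsUnit a.det := ha.det_pos.ne'.isUnit
  have hinv : (s • a)⁻¹ = s⁻¹ • a⁻¹ := by
    haveI := invertibleOfNonzero hs.ne'
    rw [Matrix.inv_smul (A := a) s hda, invOf_eq_inv s]
  have hone : (s • a)⁻¹ * (m • a) = (s⁻¹ * m) • (1 : Matrix (Fin n) (Fin n) ℝ) := by
    rw [hinv, Matrix.smul_mul, Matrix.mul_smul, Matrix.nonsing_inv_mul a hda, smul_smul]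
  have htr : trSq (s • a) (m • a) = (s⁻¹ * m) ^ 2 * n := by
    unfold trSq
    rw [hone, Matrix.smul_mul, Matrix.mul_smul, smul_smul, Matrix.one_mul, Matrix.trace_smul,
      Matrix.trace_one, smul_eq_mul, Fintype.card_fin]
    ring
  have hsq : Real.sqrt ((s⁻¹ * m) ^ 2 * n) = (s⁻¹ * m) * Real.sqrt n := by
    rw [Real.sqrt_mul (sq_nonneg _), Real.sqrt_sq (by positivity)]
  unfold fiberNorm
  rw [htr, hsq, aux_qdet_smul hg ha hs.le, Real.rpow_sub hs, Real.rpow_one]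
  field_simp

lemma aux_length {n : ℕ} (hn : 1 ≤ n) {g a₁ : Matrix (Fin n) (Fin n) ℝ} (hg : g.PosDef)
    (ha₁ : a₁.PosDef) {c m t₀ t₁ : ℝ} (hm : 0 ≤ m) (ht : t₀ ≤ t₁)
    (hpos : ∀ t ∈ Set.Icc t₀ t₁, 0 < c + m * t) :
    pathLength g (fun t : ℝ => (c + m * t) • a₁) t₀ t₁ =
      4 / Real.sqrt n * ((c + m * t₁) ^ ((n : ℝ) / 4) - (c + m * t₀) ^ ((n : ℝ) / 4)) *
        qdet g a₁ := by
  have hn0 : (0 : ℝ) < n := by exact_mod_cast Nat.pos_of_ne_zero (by omega)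
  have hsn : (0 : ℝ) < Real.sqrt n := Real.sqrt_pos.2 hn0
  set Q := qdet g a₁ with hQ
  set K : ℝ := Real.sqrt n * m * Q with hK
  have heq : Set.EqOn (fun t => fiberNorm g ((c + m * t) • a₁)
      (pathDeriv (fun s : ℝ => (c + m * s) • a₁) t))
      (fun t => K * (c + m * t) ^ ((n : ℝ) / 4 - 1)) (Set.uIcc t₀ t₁) := by
    intro t htm
    rw [Set.uIcc_of_le ht] at htm
    simp only
    rw [aux_pathDeriv, aux_fiberNorm hg ha₁ (hpos t htm) hm, hK, hQ]
    ring
  have hcont : ContinuousOn (fun t => K * (c + m * t) ^ ((n : ℝ) / 4 - 1))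
      (Set.uIcc t₀ t₁) := by
    refine continuousOn_const.mul (ContinuousOn.rpow_const ?_ ?_)
    · exact (continuous_const.add (continuous_const.mul continuous_id)).continuousOn
    · intro t htm
      rw [Set.uIcc_of_le ht] at htm
      exact Or.inl (hpos t htm).ne'
  have hint : IntervalIntegrable (fun t => K * (c + m * t) ^ ((n : ℝ) / 4 - 1))
      volume t₀ t₁ := hcont.intervalIntegrable
  have hderiv : ∀ t ∈ Set.uIcc t₀ t₁,
      HasDerivAt (fun u : ℝ => Real.sqrt n * Q * (4 / n) * (c + m * u) ^ ((n : ℝ) / 4))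
        (K * (c + m * t) ^ ((n : ℝ) / 4 - 1)) t := by
    intro t htm
    rw [Set.uIcc_of_le ht] at htm
    have h1 : HasDerivAt (fun u : ℝ => c + m * u) m t := by
      simpa using ((hasDerivAt_id t).const_mul m).const_add c
    have h2 := (h1.rpow_const (p := (n : ℝ) / 4) (Or.inl (hpos t htm).ne')).const_mul (Real.sqrt n * Q * (4 / n))
    refine h2.congr_deriv ?_
    rw [hK]
    field_simp
  rw [pathLength, intervalIntegral.integral_congr heq,
    intervalIntegral.integral_eq_sub_of_hasDerivAt hderiv hint]
  have h2 : Real.sqrt n * Real.sqrt n = n := Real.mul_self_sqrt hn0.le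
  have hc : Real.sqrt n * (4 / n) = 4 / Real.sqrt n := by
    field_simp
    linear_combination h2
  linear_combination ((c + m * t₁) ^ ((n : ℝ) / 4) - (c + m * t₀) ^ ((n : ℝ) / 4)) * Q * hc

/-- the radial path `t ↦ t • a₁` on `[ε, 1]` and its length. -/
theorem stmt_2 (n : ℕ) (hn : 1 ≤ n) (g : Matrix (Fin n) (Fin n) ℝ) (hg : g ∈ Pn n)
    (a₁ : Matrix (Fin n) (Fin n) ℝ) (ha₁ : a₁ ∈ Pn n) :
    (∀ ε : ℝ, 0 < ε → ε ≤ 1 →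
      (∀ t ∈ Set.Icc ε 1, t • a₁ ∈ Pn n) ∧
      C1On (fun t : ℝ => t • a₁) (Set.Icc ε 1) ∧
      pathLength g (fun t : ℝ => t • a₁) ε 1 =
        4 / Real.sqrt n * (1 - ε ^ ((n : ℝ) / 4)) * qdet g a₁ ∧
      ebinDist g (ε • a₁) a₁ ≤ 4 / Real.sqrt n * (1 - ε ^ ((n : ℝ) / 4)) * qdet g a₁) ∧
    Filter.Tendsto (fun ε : ℝ => pathLength g (fun t : ℝ => t • a₁) ε 1)
      (nhdsWithin 0 (Set.Ioi 0)) (nhds (4 / Real.sqrt n * qdet g a₁)) := by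
  have hgP : (g : Matrix (Fin n) (Fin n) ℝ).PosDef := hg
  have haP : (a₁ : Matrix (Fin n) (Fin n) ℝ).PosDef := ha₁
  have hfun : (fun t : ℝ => t • a₁) = fun t : ℝ => ((0 : ℝ) + 1 * t) • a₁ := by
    funext t; norm_num
  have hlen : ∀ ε : ℝ, 0 < ε → ε ≤ 1 →
      pathLength g (fun t : ℝ => t • a₁) ε 1 =
        4 / Real.sqrt n * (1 - ε ^ ((n : ℝ) / 4)) * qdet g a₁ := by
    intro ε hε hε1
    rw [hfun, aux_length hn hgP haP zero_le_one hε1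
      (fun t htm => by simpa using lt_of_lt_of_le hε htm.1)]
    norm_num
  have main : ∀ ε : ℝ, 0 < ε → ε ≤ 1 →
      (∀ t ∈ Set.Icc ε 1, t • a₁ ∈ Pn n) ∧
      C1On (fun t : ℝ => t • a₁) (Set.Icc ε 1) ∧
      pathLength g (fun t : ℝ => t • a₁) ε 1 =
        4 / Real.sqrt n * (1 - ε ^ ((n : ℝ) / 4)) * qdet g a₁ ∧
      ebinDist g (ε • a₁) a₁ ≤ 4 / Real.sqrt n * (1 - ε ^ ((n : ℝ) / 4)) * qdet g a₁ := by
    intro ε hε hε1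
    refine ⟨fun t htm => aux_posdef_smul haP (lt_of_lt_of_le hε htm.1), ?_, hlen ε hε hε1, ?_⟩
    · intro i j
      exact (contDiff_id.mul contDiff_const).contDiffOn
    · -- ebinDist bound
      apply csInf_le
      · refine ⟨0, fun L hL => ?_⟩
        obtain ⟨γ, hpc, hPn, -, -, rfl⟩ := hL
        refine intervalIntegral.integral_nonneg zero_le_one fun u hu => ?_
        exact mul_nonneg (Real.sqrt_nonneg _) (aux_qdet_nonneg hgP (hPn u hu))
      · refine ⟨fun t : ℝ => (ε + (1 - ε) * t) • a₁,
          ⟨((continuous_const.add (continuous_const.mul continuous_id)).smul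
            continuous_const).continuousOn,
           1, fun i => ((i : ℕ) : ℝ), ?_, by simp, by simp [Fin.last], ?_⟩, ?_, ?_, ?_, ?_⟩
        · intro i j hij
          exact_mod_cast Nat.cast_lt.mpr hij
        · intro _ i j
          exact ((contDiff_const.add (contDiff_const.mul contDiff_id)).mul
            contDiff_const).contDiffOn
        · intro t htm
          have : 0 < ε + (1 - ε) * t := by
            nlinarith [mul_nonneg (sub_nonneg.2 hε1) htm.1]
          exact aux_posdef_smul haP this
        · show (ε + (1 - ε) * 0) • a₁ = ε • a₁
          norm_num
        · show (ε + (1 - ε) * 1) • a₁ = a₁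
          rw [show ε + (1 - ε) * 1 = 1 by ring, one_smul]
        · rw [aux_length hn hgP haP (by linarith) zero_le_one ?_]
          · rw [show ε + (1 - ε) * 1 = 1 by ring, show ε + (1 - ε) * 0 = ε by ring,
              Real.one_rpow]
          · intro t htm
            nlinarith [htm.1, htm.2]
  refine ⟨main, ?_⟩
  have hp : (0 : ℝ) < (n : ℝ) / 4 := by
    have : (0 : ℝ) < n := by exact_mod_cast Nat.pos_of_ne_zero (by omega)
    linarith
  have h1 : Tendsto (fun ε : ℝ => ε ^ ((n : ℝ) / 4)) (nhdsWithin 0 (Set.Ioi 0)) (nhds 0) := by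
    have := (Real.continuousAt_rpow_const 0 ((n : ℝ) / 4) (Or.inr hp.le)).continuousWithinAt
      (s := Set.Ioi (0 : ℝ))
    rwa [ContinuousWithinAt, Real.zero_rpow hp.ne'] at this
  have h2 : Tendsto (fun ε : ℝ => 4 / Real.sqrt n * (1 - ε ^ ((n : ℝ) / 4)) * qdet g a₁)
      (nhdsWithin 0 (Set.Ioi 0)) (nhds (4 / Real.sqrt n * (1 - 0) * qdet g a₁)) :=
    ((tendsto_const_nhds.sub h1).const_mul _).mul_const _
  rw [sub_zero, mul_one] at h2
  have hev : (fun ε : ℝ => 4 / Real.sqrt n * (1 - ε ^ ((n : ℝ) / 4)) * qdet g a₁)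
      =ᶠ[nhdsWithin 0 (Set.Ioi 0)] fun ε : ℝ => pathLength g (fun t : ℝ => t • a₁) ε 1 := by
    filter_upwards [Ioo_mem_nhdsGT_of_mem (Set.mem_Ico.mpr ⟨le_refl (0 : ℝ), zero_lt_one⟩)]
      with ε hε
    exact (hlen ε hε.1 hε.2.le).symm
  exact Tendsto.congr' hev h2


end
end

section
/- Let a : [0,1) → P_n be a path that is piecewise C¹ on every subinterval [0,s] with s < 1, and suppose its total length is finite, i.e. sup_{s<1} L(a|_{[0,s]}) < ∞. If det(g⁻¹a(t)) does not converge to 0 as t → 1, then a(t) converges entrywise as t → 1 to a limit belonging to P_n. -/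
open Matrix Real MeasureTheory Filter
open Topology

noncomputable section

namespace StmtAux


variable {n : ℕ}

lemma real_transpose_of_isHermitian {A : Matrix (Fin n) (Fin n) ℝ} (h : A.IsHermitian) :
    Aᵀ = A := by
  ext i j
  simpa [Matrix.conjTranspose_apply] using congrFun (congrFun h i) j

lemma cs_quad (S : Matrix (Fin n) (Fin n) ℝ) (w : Fin n → ℝ) :
    |w ⬝ᵥ (S *ᵥ w)| ≤ Real.sqrt (∑ i, ∑ j, S i j ^ 2) * (w ⬝ᵥ w) := by
  have hq : w ⬝ᵥ (S *ᵥ w) = ∑ p ∈ (Finset.univ ×ˢ Finset.univ),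
      S p.1 p.2 * (w p.1 * w p.2) := by
    rw [Finset.sum_product]
    simp only [dotProduct, Matrix.mulVec]
    exact Finset.sum_congr rfl fun i _ => by
      rw [Finset.mul_sum]; exact Finset.sum_congr rfl fun j _ => by ring
  have hcs := Finset.sum_mul_sq_le_sq_mul_sq (Finset.univ ×ˢ Finset.univ)
      (fun p => S p.1 p.2) (fun p => w p.1 * w p.2)
  have h2 : (∑ p ∈ (Finset.univ ×ˢ Finset.univ), (w p.1 * w p.2) ^ 2)
      = (∑ i, w i ^ 2) ^ 2 := by
    rw [Finset.sum_product, sq, Finset.sum_mul_sum]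
    exact Finset.sum_congr rfl fun i _ => Finset.sum_congr rfl fun j _ => by ring
  have h1 : (∑ p ∈ (Finset.univ ×ˢ Finset.univ), S p.1 p.2 ^ 2)
      = ∑ i, ∑ j, S i j ^ 2 := Finset.sum_product _ _ _
  rw [hq]
  have := Real.abs_le_sqrt (hcs.trans_eq (by rw [h1, h2]))
  refine this.trans_eq ?_
  rw [Real.sqrt_mul (by positivity), Real.sqrt_sq (by positivity)]
  congr 1
  simp [dotProduct, sq]

/-- Master conjugation lemma. -/
lemma master {a b : Matrix (Fin n) (Fin n) ℝ} (ha : a.PosDef) (hb : bᵀ = b) :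
    0 ≤ trSq a b ∧
    |(a⁻¹ * b).trace| ≤ Real.sqrt n * Real.sqrt (trSq a b) ∧
    ∀ v : Fin n → ℝ, |v ⬝ᵥ (b *ᵥ v)| ≤ Real.sqrt (trSq a b) * (v ⬝ᵥ (a *ᵥ v)) := by
  have hainv : (a⁻¹).PosDef := ha.inv
  have hps : (a⁻¹).PosSemidef := hainv.posSemidef
  obtain ⟨c, hcsymm, hc2⟩ : ∃ c : Matrix (Fin n) (Fin n) ℝ, cᵀ = c ∧ c * c = a⁻¹ :=
    by
      open scoped MatrixOrder in
      obtain ⟨X, hX, -, hXX⟩ := CFC.exists_sqrt_of_isSelfAdjoint_of_quasispectrumRestricts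
        hps.isHermitian (QuasispectrumRestricts.nnreal_of_nonneg hps.nonneg)
      exact ⟨X, real_transpose_of_isHermitian hX, hXX⟩
  have hadet : IsUnit a.det := isUnit_iff_ne_zero.mpr ha.det_pos.ne'
  have hca : c * (c * a) = 1 := by
    rw [← mul_assoc, hc2, Matrix.nonsing_inv_mul a hadet]
  have hac : (c * a) * c = 1 := mul_eq_one_comm.mp hca
  set S := c * b * c with hSdef
  have hST : Sᵀ = S := by
    rw [hSdef, Matrix.transpose_mul, Matrix.transpose_mul, hcsymm, hb, mul_assoc]
  have hSsymm : ∀ i j, S j i = S i j := fun i j => by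
    rw [← Matrix.transpose_apply S i j, hST]
  have htrS : ∀ X Y : Matrix (Fin n) (Fin n) ℝ, (X * Y).trace = ∑ i, ∑ j, X i j * Y j i := by
    intro X Y
    simp [Matrix.trace, Matrix.diag, Matrix.mul_apply]
  have htr : trSq a b = ∑ i, ∑ j, S i j ^ 2 := by
    have e1 : (a⁻¹ * b) * (a⁻¹ * b) = c * (c*(b*(c*(c*b)))) := by
      rw [← hc2]; simp only [mul_assoc]
    have e2 : (c*(b*(c*(c*b)))) * c = S * S := by
      rw [hSdef]; simp only [mul_assoc]
    rw [trSq, e1, Matrix.trace_mul_comm, e2, htrS]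
    refine Finset.sum_congr rfl fun i _ => Finset.sum_congr rfl fun j _ => ?_
    rw [hSsymm i j, sq]
  have htr2 : (a⁻¹ * b).trace = ∑ i, S i i := by
    have e1 : a⁻¹ * b = c * (c * b) := by rw [← hc2, mul_assoc]
    have e2 : (c * b) * c = S := by rw [hSdef, mul_assoc]
    rw [e1, Matrix.trace_mul_comm, e2]
    simp [Matrix.trace, Matrix.diag]
  have htrSq_nonneg : 0 ≤ trSq a b := by
    rw [htr]; positivity
  refine ⟨htrSq_nonneg, ?_, ?_⟩
  · -- trace Cauchy-Schwarz
    have hcs := Finset.sum_mul_sq_le_sq_mul_sq Finset.univ (fun i => S i i) (fun _ => (1:ℝ))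
    simp only [mul_one, one_pow] at hcs
    have h3 : ∑ i, S i i ^ 2 ≤ ∑ i, ∑ j, S i j ^ 2 :=
      Finset.sum_le_sum fun i _ =>
        Finset.single_le_sum (fun j _ => sq_nonneg (S i j)) (Finset.mem_univ i)
    have hle : (∑ i, S i i) ^ 2 ≤ (∑ i, ∑ j, S i j ^ 2) * n := by
      refine hcs.trans ?_
      rw [Finset.sum_const, Finset.card_univ, Fintype.card_fin, nsmul_eq_mul, mul_comm (n:ℝ)]
      rw [one_mul]
      exact mul_le_mul_of_nonneg_right h3 (Nat.cast_nonneg n)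
    rw [htr2, htr]
    have := Real.abs_le_sqrt hle
    refine this.trans_eq ?_
    rw [Real.sqrt_mul (by positivity), mul_comm]
  · -- quadratic form bound
    intro v
    obtain ⟨w, hw⟩ : ∃ w, c *ᵥ w = v := ⟨(c * a) *ᵥ v, by
      rw [Matrix.mulVec_mulVec, hca, Matrix.one_mulVec]⟩
    have hconj : ∀ X : Matrix (Fin n) (Fin n) ℝ,
        v ⬝ᵥ (X *ᵥ v) = w ⬝ᵥ ((c * X * c) *ᵥ w) := by
      intro X
      rw [← hw]
      rw [Matrix.mulVec_mulVec]
      conv_lhs => rw [show c *ᵥ w = w ᵥ* cᵀ by rw [← Matrix.mulVec_transpose, Matrix.transpose_transpose]]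
      rw [Matrix.dotProduct_mulVec, Matrix.vecMul_vecMul, hcsymm, ← Matrix.dotProduct_mulVec]
      rw [← mul_assoc]
    have hb' : v ⬝ᵥ (b *ᵥ v) = w ⬝ᵥ (S *ᵥ w) := hconj b
    have ha' : v ⬝ᵥ (a *ᵥ v) = w ⬝ᵥ w := by
      rw [hconj a, show c * a * c = 1 from hac, Matrix.one_mulVec]
    rw [hb', ha', htr]
    exact cs_quad S w



lemma perm_aux {σ : Equiv.Perm (Fin n)} (hσ : σ ≠ 1) (i : Fin n) :
    ∃ j, j ≠ i ∧ σ j ≠ j := by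
  have : ∃ p, σ p ≠ p := by
    by_contra h
    push_neg at h
    exact hσ (Equiv.ext h)
  obtain ⟨p, hp⟩ := this
  by_cases hpi : p = i
  · subst hpi
    refine ⟨σ p, hp, fun h => hp (σ.injective h)⟩
  · exact ⟨p, hpi, hp⟩

lemma hasDerivWithinAt_det_at_one {M : ℝ → Matrix (Fin n) (Fin n) ℝ}
    {B : Matrix (Fin n) (Fin n) ℝ} {S : Set ℝ} {t : ℝ}
    (hM : ∀ i j, HasDerivWithinAt (fun u => M u i j) (B i j) S t) (h1 : M t = 1) :
    HasDerivWithinAt (fun u => (M u).det) B.trace S t := by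
  have hfun : (fun u => (M u).det) = fun u => ∑ σ : Equiv.Perm (Fin n),
      ((Equiv.Perm.sign σ : ℤ) : ℝ) * ∏ i, M u (σ i) i := by
    funext u
    rw [Matrix.det_apply]
    exact Finset.sum_congr rfl fun σ _ => by
      rw [Units.smul_def, zsmul_eq_mul]
  rw [hfun]
  have hder : ∀ σ : Equiv.Perm (Fin n), HasDerivWithinAt
      (fun u => ((Equiv.Perm.sign σ : ℤ) : ℝ) * ∏ i, M u (σ i) i)
      (((Equiv.Perm.sign σ : ℤ) : ℝ) *
        ∑ i, (∏ j ∈ Finset.univ.erase i, M t (σ j) j) • B (σ i) i) S t := by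
    intro σ
    exact (HasDerivWithinAt.fun_finsetProd fun i _ => hM (σ i) i).const_mul _
  have hsum := HasDerivWithinAt.fun_sum (fun σ (_ : σ ∈ Finset.univ) => hder σ)
  refine hsum.congr_deriv (Eq.symm ?_)
  rw [Finset.sum_eq_single (1 : Equiv.Perm (Fin n))]
  · simp only [Equiv.Perm.sign_one, Units.val_one, Int.cast_one, one_mul, Equiv.Perm.one_apply]
    have hone : ∀ i : Fin n, (∏ j ∈ Finset.univ.erase i, M t j j) = 1 := fun i =>
      Finset.prod_eq_one fun j _ => by rw [h1, Matrix.one_apply_eq]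
    simp [hone, Matrix.trace, Matrix.diag]
  · intro σ _ hσ
    have : ∀ i : Fin n, (∏ j ∈ Finset.univ.erase i, M t (σ j) j) = 0 := by
      intro i
      obtain ⟨j₀, hj₀i, hj₀⟩ := perm_aux hσ i
      refine Finset.prod_eq_zero (Finset.mem_erase.2 ⟨hj₀i, Finset.mem_univ _⟩) ?_
      rw [h1, Matrix.one_apply_ne hj₀]
    simp [this]
  · simp

lemma hasDerivWithinAt_det' {γ : ℝ → Matrix (Fin n) (Fin n) ℝ}
    {b : Matrix (Fin n) (Fin n) ℝ} {S : Set ℝ} {t : ℝ}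
    (hdet : (γ t).det ≠ 0)
    (hd : ∀ i j, HasDerivWithinAt (fun u => γ u i j) (b i j) S t) :
    HasDerivWithinAt (fun u => (γ u).det) ((γ t).det * ((γ t)⁻¹ * b).trace) S t := by
  have key : (fun u => (γ u).det) = fun u => (γ t).det * ((γ t)⁻¹ * γ u).det := by
    funext u
    rw [Matrix.det_mul, Matrix.det_nonsing_inv, Ring.inverse_eq_inv', ← mul_assoc,
      mul_inv_cancel₀ hdet, one_mul]
  rw [key]
  have hM : ∀ i j, HasDerivWithinAt (fun u => ((γ t)⁻¹ * γ u) i j) (((γ t)⁻¹ * b) i j) S t := by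
    intro i j
    simp only [Matrix.mul_apply]
    exact HasDerivWithinAt.fun_sum fun k _ => (hd k j).const_mul _
  have h1 : (γ t)⁻¹ * γ t = 1 := Matrix.nonsing_inv_mul _ (isUnit_iff_ne_zero.2 hdet)
  exact (hasDerivWithinAt_det_at_one hM h1).const_mul _

lemma hasDerivWithinAt_qdet {g : Matrix (Fin n) (Fin n) ℝ} {γ : ℝ → Matrix (Fin n) (Fin n) ℝ}
    {b : Matrix (Fin n) (Fin n) ℝ} {S : Set ℝ} {t : ℝ}
    (hg : g.PosDef) (hpd : (γ t).PosDef)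
    (hd : ∀ i j, HasDerivWithinAt (fun u => γ u i j) (b i j) S t) :
    HasDerivWithinAt (fun u => qdet g (γ u))
      ((1/4) * qdet g (γ t) * ((γ t)⁻¹ * b).trace) S t := by
  have hginv : (g⁻¹).PosDef := hg.inv
  have hDpos : 0 < (g⁻¹).det * (γ t).det := mul_pos hginv.det_pos hpd.det_pos
  have hfun : (fun u => qdet g (γ u)) = fun u => ((g⁻¹).det * (γ u).det) ^ ((1:ℝ)/4) := by
    funext u
    rw [qdet, Matrix.det_mul]
  rw [hfun]
  have hinner : HasDerivWithinAt (fun u => (g⁻¹).det * (γ u).det)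
      ((g⁻¹).det * ((γ t).det * ((γ t)⁻¹ * b).trace)) S t :=
    (hasDerivWithinAt_det' hpd.det_pos.ne' hd).const_mul _
  have houter := Real.hasDerivAt_rpow_const (x := (g⁻¹).det * (γ t).det) (p := (1:ℝ)/4)
    (Or.inl hDpos.ne')
  have hcomp := houter.comp_hasDerivWithinAt t hinner
  refine hcomp.congr_deriv (Eq.symm ?_)
  rw [qdet, Matrix.det_mul]
  set D := (g⁻¹).det * (γ t).det
  have hpow : D ^ ((1:ℝ)/4 - 1) * D = D ^ ((1:ℝ)/4) := by
    nth_rewrite 2 [← Real.rpow_one D]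
    rw [← Real.rpow_add hDpos]
    norm_num
  have : (1:ℝ)/4 * D ^ ((1:ℝ)/4 - 1) * ((g⁻¹).det * ((γ t).det * ((γ t)⁻¹ * b).trace))
      = (1/4) * (D ^ ((1:ℝ)/4 - 1) * D) * ((γ t)⁻¹ * b).trace := by
    rw [show (g⁻¹).det * ((γ t).det * ((γ t)⁻¹ * b).trace) = D * ((γ t)⁻¹ * b).trace by
      rw [← mul_assoc]]
    ring
  rw [this, hpow]

lemma hasDerivWithinAt_quad {γ : ℝ → Matrix (Fin n) (Fin n) ℝ}
    {b : Matrix (Fin n) (Fin n) ℝ} {S : Set ℝ} {t : ℝ} (w : Fin n → ℝ)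
    (hd : ∀ i j, HasDerivWithinAt (fun u => γ u i j) (b i j) S t) :
    HasDerivWithinAt (fun u => w ⬝ᵥ ((γ u) *ᵥ w)) (w ⬝ᵥ (b *ᵥ w)) S t := by
  have hfun : (fun u => w ⬝ᵥ ((γ u) *ᵥ w)) = fun u => ∑ i, ∑ j, w i * (γ u i j * w j) := by
    funext u
    simp only [dotProduct, Matrix.mulVec]
    exact Finset.sum_congr rfl fun i _ => by rw [Finset.mul_sum]
  rw [hfun]
  have : w ⬝ᵥ (b *ᵥ w) = ∑ i, ∑ j, w i * (b i j * w j) := by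
    simp only [dotProduct, Matrix.mulVec]
    exact Finset.sum_congr rfl fun i _ => by rw [Finset.mul_sum]
  rw [this]
  exact HasDerivWithinAt.fun_sum fun i _ => HasDerivWithinAt.fun_sum fun j _ =>
    ((hd i j).mul_const _).const_mul _




lemma piece_locate {k : ℕ} {s : Fin (k+1) → ℝ} (hs : StrictMono s) {t : ℝ}
    (h : t ∈ Set.Ioo (s 0) (s (Fin.last k))) :
    (∃ i : Fin k, t ∈ Set.Ioo (s i.castSucc) (s i.succ)) ∨
      ∃ i : Fin k, t = s i.castSucc := by
  classical
  set T := Finset.univ.filter (fun i : Fin (k+1) => s i ≤ t) with hT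
  have hTne : T.Nonempty := ⟨0, by simp [hT, h.1.le]⟩
  set i := T.max' hTne with hidef
  have hit : s i ≤ t := (Finset.mem_filter.mp (T.max'_mem hTne)).2
  have hik : i ≠ Fin.last k := by
    rintro he
    rw [he] at hit
    exact absurd hit (not_le.mpr h.2)
  have hlt : (i : ℕ) < k := by
    have := Fin.lt_last_iff_ne_last.mpr hik
    exact this
  set i' : Fin k := ⟨(i : ℕ), hlt⟩ with hi'def
  have hcs : i'.castSucc = i := by
    apply Fin.ext
    simp [hi'def]
  have hsucc : t < s i'.succ := by
    by_contra hnot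
    push_neg at hnot
    have hmem : i'.succ ∈ T := by simp [hT, hnot]
    have hle := T.le_max' _ hmem
    rw [← hidef] at hle
    have hlt2 : i'.castSucc < i'.succ := Fin.castSucc_lt_succ (i := i')
    rw [hcs] at hlt2
    exact absurd (lt_of_le_of_lt hle hlt2) (lt_irrefl _)
  rcases eq_or_lt_of_le hit with he|hlt2
  · right
    exact ⟨i', by rw [hcs, he]⟩
  · left
    refine ⟨i', ⟨?_, hsucc⟩⟩
    rw [hcs]
    exact hlt2

lemma piece_interior_hasDerivAt {γ : ℝ → Matrix (Fin n) (Fin n) ℝ} {p q t : ℝ}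
    (hC : C1On γ (Set.Icc p q)) (ht : t ∈ Set.Ioo p q) (i j : Fin n) :
    HasDerivAt (fun x => γ x i j) (pathDeriv γ t i j) t := by
  have hmem : Set.Icc p q ∈ 𝓝 t := Icc_mem_nhds ht.1 ht.2
  have hdiff : DifferentiableAt ℝ (fun x => γ x i j) t :=
    (((hC i j).differentiableOn (by norm_num)) t (Set.mem_Icc_of_Ioo ht)).differentiableAt hmem
  simpa [pathDeriv] using hdiff.hasDerivAt

/-- Integrability of the norm integrand on a single `C¹` piece. -/
lemma piece_integrable {g : Matrix (Fin n) (Fin n) ℝ} {γ : ℝ → Matrix (Fin n) (Fin n) ℝ}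
    {p q : ℝ} (hpq : p < q) (hC : C1On γ (Set.Icc p q))
    (hpd : ∀ t ∈ Set.Icc p q, (γ t).PosDef) :
    IntegrableOn (fun t => fiberNorm g (γ t) (pathDeriv γ t)) (Set.Icc p q) volume := by
  set E := Set.Icc p q with hE
  set D : ℝ → Matrix (Fin n) (Fin n) ℝ :=
    fun t => Matrix.of fun i j => derivWithin (fun x => γ x i j) E t with hD
  have cγ : Continuous (fun x : E => γ (x : ℝ)) :=
    continuous_matrix fun i j =>
      continuousOn_iff_continuous_restrict.mp ((hC i j).continuousOn)
  have cD : Continuous (fun x : E => D (x : ℝ)) :=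
    continuous_matrix fun i j => by
      have := (hC i j).continuousOn_derivWithin (uniqueDiffOn_Icc hpq) le_rfl
      exact continuousOn_iff_continuous_restrict.mp this
  have cdet : Continuous (fun x : E => (γ (x : ℝ)).det) := cγ.matrix_det
  have cinv : Continuous (fun x : E => (γ (x : ℝ))⁻¹) := by
    have heq : (fun x : E => (γ (x : ℝ))⁻¹)
        = fun x : E => ((γ (x : ℝ)).det)⁻¹ • (γ (x : ℝ)).adjugate := by
      funext x
      rw [Matrix.inv_def, Ring.inverse_eq_inv']
    rw [heq]
    exact (cdet.inv₀ fun x => (hpd x x.2).det_pos.ne').smul cγ.matrix_adjugate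
  have ctrSq : Continuous (fun x : E => trSq (γ (x : ℝ)) (D (x : ℝ))) :=
    ((cinv.matrix_mul cD).matrix_mul (cinv.matrix_mul cD)).matrix_trace
  have cqdet : Continuous (fun x : E => qdet g (γ (x : ℝ))) :=
    (Continuous.matrix_det (continuous_const.matrix_mul cγ)).rpow_const
      fun x => Or.inr (by norm_num)
  have cN : ContinuousOn (fun t => Real.sqrt (trSq (γ t) (D t)) * qdet g (γ t)) E :=
    continuousOn_iff_continuous_restrict.mpr
      ((Real.continuous_sqrt.comp ctrSq).mul cqdet)
  have hint : IntegrableOn (fun t => Real.sqrt (trSq (γ t) (D t)) * qdet g (γ t)) E volume :=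
    cN.integrableOn_Icc
  rw [hE, integrableOn_Icc_iff_integrableOn_Ioo]
  refine IntegrableOn.congr_fun (hint.mono_set Set.Ioo_subset_Icc_self) ?_ measurableSet_Ioo
  intro t ht
  have hDP : D t = pathDeriv γ t := by
    ext i j
    simp only [hD, pathDeriv, Matrix.of_apply]
    exact derivWithin_of_mem_nhds (Icc_mem_nhds ht.1 ht.2)
  simp only []
  rw [hDP]
  rfl

/-- Integrability of the norm integrand on `[0, v]`. -/
lemma integrableOn_N {g : Matrix (Fin n) (Fin n) ℝ} {γ : ℝ → Matrix (Fin n) (Fin n) ℝ}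
    (hpw : ∀ s : ℝ, 0 < s → s < 1 → PiecewiseC1On γ 0 s)
    (hmem : ∀ t ∈ Set.Ico (0:ℝ) 1, (γ t).PosDef)
    {v : ℝ} (h0 : 0 ≤ v) (h1 : v < 1) :
    IntegrableOn (fun t => fiberNorm g (γ t) (pathDeriv γ t)) (Set.Icc 0 v) volume := by
  have hsing : ∀ x : ℝ, IntegrableOn (fun t => fiberNorm g (γ t) (pathDeriv γ t)) {x} volume := by
    intro x
    have hz : volume.restrict ({x} : Set ℝ) = 0 :=
      Measure.restrict_eq_zero.mpr (measure_singleton x)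
    rw [IntegrableOn, hz]
    exact integrable_zero_measure
  rcases eq_or_lt_of_le h0 with rfl|hv
  · rw [Set.Icc_self]
    exact hsing 0
  obtain ⟨hcont, k, s, hsmono, hs0, hsl, hC⟩ := hpw v hv h1
  have hsub : ∀ i : Fin (k+1), Set.Icc (s 0) (s i) ⊆ Set.Ico 0 1 := by
    intro i x hx
    constructor
    · rw [← hs0]; exact hx.1
    · refine lt_of_le_of_lt (hx.2.trans ?_) h1
      rw [← hsl]
      exact (hsmono.monotone (Fin.le_last i))
  have key : ∀ i : Fin (k+1),
      IntegrableOn (fun t => fiberNorm g (γ t) (pathDeriv γ t)) (Set.Icc (s 0) (s i)) volume := by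
    intro i
    induction i using Fin.induction with
    | zero => rw [Set.Icc_self]; exact hsing _
    | succ i ih =>
      have hpq : s i.castSucc < s i.succ := hsmono (Fin.castSucc_lt_succ (i := i))
      have hsubp : Set.Icc (s i.castSucc) (s i.succ) ⊆ Set.Ico 0 1 := by
        refine Set.Subset.trans ?_ (hsub i.succ)
        exact Set.Icc_subset_Icc_left (hsmono.monotone (Fin.zero_le _))
      have hpiece := piece_integrable (g := g) hpq (hC i) (fun t ht => hmem t (hsubp ht))
      have hunion := ih.union hpiece
      rwa [Set.Icc_union_Icc_eq_Icc (hsmono.monotone (Fin.zero_le _)) hpq.le] at hunion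
  have := key (Fin.last k)
  rwa [hs0, hsl] at this


/-- Key FTC estimate: variation of `F` is bounded by `K ∫ N`. -/
lemma key_estimate {g : Matrix (Fin n) (Fin n) ℝ} {γ : ℝ → Matrix (Fin n) (Fin n) ℝ}
    (hpw : ∀ s : ℝ, 0 < s → s < 1 → PiecewiseC1On γ 0 s)
    (N : ℝ → ℝ) (hN : N = fun t => fiberNorm g (γ t) (pathDeriv γ t))
    (hNint : ∀ u v : ℝ, 0 ≤ u → u ≤ v → v < 1 → IntervalIntegrable N volume u v)
    (F : ℝ → ℝ) (Φ : ℝ → Matrix (Fin n) (Fin n) ℝ → ℝ) (K : ℝ) (hK : 0 ≤ K)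
    {u v : ℝ} (hu : 0 ≤ u) (huv : u ≤ v) (hv : v < 1)
    (hN0 : ∀ t ∈ Set.Icc u v, 0 ≤ N t)
    (hFc : ContinuousOn F (Set.Icc u v))
    (hFd : ∀ t ∈ Set.Ioo u v, ∀ (S : Set ℝ) (b : Matrix (Fin n) (Fin n) ℝ),
        (∀ i j, HasDerivWithinAt (fun x => γ x i j) (b i j) S t) →
        HasDerivWithinAt F (Φ t b) S t)
    (hbound : ∀ t ∈ Set.Ioo u v, |Φ t (pathDeriv γ t)| ≤ K * N t) :
    |F v - F u| ≤ K * ∫ t in u..v, N t := by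
  rcases eq_or_lt_of_le huv with rfl|huv
  · simp
  have hv0 : 0 < v := lt_of_le_of_lt hu huv
  set v' : ℝ := (v + 1)/2 with hv'def
  have hvv' : v < v' := by rw [hv'def]; linarith
  have hv'1 : v' < 1 := by rw [hv'def]; linarith
  have hv'0 : 0 < v' := lt_trans hv0 hvv'
  obtain ⟨hcont, k, s, hsmono, hs0, hsl, hC⟩ := hpw v' hv'0 hv'1
  set J : Set ℝ := Set.range s with hJ
  set F' : ℝ → ℝ := fun t => derivWithin F (Set.Ioi t) t with hF'
  have hloc : ∀ t ∈ Set.Ioo u v, t ∈ Set.Ioo (s 0) (s (Fin.last k)) := by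
    intro t ht
    rw [hs0, hsl]
    exact ⟨lt_of_le_of_lt hu ht.1, lt_trans ht.2 hvv'⟩
  have hC1 : ∀ t ∈ Set.Ioo u v, HasDerivWithinAt F (F' t) (Set.Ioi t) t := by
    intro t ht
    rcases piece_locate hsmono (hloc t ht) with ⟨i, hi⟩|⟨i, hi⟩
    · have hder := piece_interior_hasDerivAt (hC i) hi
      have h1 := hFd t ht (Set.Ioi t) _ (fun i_ j => (hder i_ j).hasDerivWithinAt)
      have h2 := h1.derivWithin (uniqueDiffWithinAt_Ioi t)
      rw [show F' t = derivWithin F (Set.Ioi t) t from rfl, h2]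
      exact h1
    · have hq : s i.castSucc < s i.succ := hsmono (Fin.castSucc_lt_succ (i := i))
      set b : Matrix (Fin n) (Fin n) ℝ :=
        Matrix.of fun i_ j => derivWithin (fun x => γ x i_ j)
          (Set.Icc (s i.castSucc) (s i.succ)) t with hb
      have hmem : t ∈ Set.Icc (s i.castSucc) (s i.succ) := by
        rw [hi]; exact Set.left_mem_Icc.mpr hq.le
      have hnb : Set.Icc (s i.castSucc) (s i.succ) ∈ 𝓝[>] t := by
        rw [hi]
        exact Icc_mem_nhdsGT_of_mem ⟨le_refl _, hq⟩
      have hder : ∀ i_ j, HasDerivWithinAt (fun x => γ x i_ j) (b i_ j) (Set.Ioi t) t := by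
        intro i_ j
        have hdw := ((hC i i_ j).differentiableOn (by norm_num)) t hmem
        exact hdw.hasDerivWithinAt.mono_of_mem_nhdsWithin hnb
      have h1 := hFd t ht (Set.Ioi t) b hder
      have h2 := h1.derivWithin (uniqueDiffWithinAt_Ioi t)
      rw [show F' t = derivWithin F (Set.Ioi t) t from rfl, h2]
      exact h1
  have hptwise : ∀ t ∈ Set.Ioo u v \ J, |F' t| ≤ K * N t := by
    rintro t ⟨ht, htJ⟩
    rcases piece_locate hsmono (hloc t ht) with ⟨i, hi⟩|⟨i, hi⟩
    · have hder := piece_interior_hasDerivAt (hC i) hi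
      have h1 := hFd t ht (Set.Ioi t) (pathDeriv γ t)
        (fun i_ j => (hder i_ j).hasDerivWithinAt)
      have h2 := h1.derivWithin (uniqueDiffWithinAt_Ioi t)
      rw [show F' t = derivWithin F (Set.Ioi t) t from rfl, h2]
      exact hbound t ht
    · exact absurd (hi ▸ Set.mem_range_self i.castSucc) htJ
  have hJnull : volume (({v} : Set ℝ) ∪ J) = 0 :=
    measure_union_null (measure_singleton v) ((Set.finite_range s).measure_zero volume)
  have hbd : ∀ᵐ t ∂(volume.restrict (Set.uIoc u v)), ‖F' t‖ ≤ K * N t := by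
    rw [ae_restrict_iff' measurableSet_uIoc]
    filter_upwards [measure_eq_zero_iff_ae_notMem.mp hJnull] with t htz htI
    rw [Set.uIoc_of_le huv.le] at htI
    have htv : t ≠ v := fun h => htz (Or.inl (h ▸ rfl))
    have htJ : t ∉ J := fun h => htz (Or.inr h)
    have : t ∈ Set.Ioo u v := ⟨htI.1, lt_of_le_of_ne htI.2 htv⟩
    rw [Real.norm_eq_abs]
    exact hptwise t ⟨this, htJ⟩
  have hKN : IntervalIntegrable (fun t => K * N t) volume u v :=
    (hNint u v hu huv.le hv).const_mul K
  have hFi : IntervalIntegrable F' volume u v := by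
    rw [intervalIntegrable_iff]
    refine Integrable.mono' ((intervalIntegrable_iff).mp hKN)
      ((measurable_derivWithin_Ioi F).aestronglyMeasurable) hbd
  have hFTC := intervalIntegral.integral_eq_sub_of_hasDeriv_right_of_le huv.le hFc hC1 hFi
  have hInt0 : 0 ≤ ∫ t in u..v, N t :=
    intervalIntegral.integral_nonneg huv.le fun t ht => hN0 t ht
  calc |F v - F u| = ‖∫ t in u..v, F' t‖ := by rw [hFTC, Real.norm_eq_abs]
    _ ≤ |∫ t in u..v, K * N t| := intervalIntegral.norm_integral_le_abs_of_norm_le hbd hKN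
    _ = K * ∫ t in u..v, N t := by
        rw [intervalIntegral.integral_const_mul, abs_of_nonneg (mul_nonneg hK hInt0)]

/-- Cauchy criterion giving a limit at `1⁻`. -/
lemma tendsto_of_est (F ℓ : ℝ → ℝ) (K L t₀ : ℝ) (hK : 0 ≤ K) (ht₀ : t₀ < 1)
    (hmono : ∀ u v : ℝ, t₀ ≤ u → u ≤ v → v < 1 → ℓ u ≤ ℓ v)
    (hub : ∀ u : ℝ, t₀ ≤ u → u < 1 → ℓ u ≤ L)
    (happrox : ∀ ε : ℝ, 0 < ε → ∃ w, t₀ ≤ w ∧ w < 1 ∧ L - ε < ℓ w)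
    (hest : ∀ u v : ℝ, t₀ ≤ u → u ≤ v → v < 1 → |F v - F u| ≤ K * (ℓ v - ℓ u)) :
    ∃ l, Tendsto F (𝓝[<] (1:ℝ)) (𝓝 l) := by
  have hcauchy : Cauchy (Filter.map F (𝓝[<] (1:ℝ))) := by
    rw [Metric.cauchy_iff]
    constructor
    · exact Filter.map_neBot
    intro ε hε
    obtain ⟨w, hw0, hw1, hwL⟩ := happrox (ε / (K+1)) (by positivity)
    refine ⟨F '' (Set.Ioo w 1), Filter.image_mem_map
      (Ioo_mem_nhdsLT_of_mem ⟨hw1, le_refl 1⟩), ?_⟩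
    have key : ∀ x y : ℝ, x ∈ Set.Ioo w 1 → y ∈ Set.Ioo w 1 → x ≤ y → |F y - F x| < ε := by
      intro x y hx hy hxy
      have h1 : |F y - F x| ≤ K * (ℓ y - ℓ x) :=
        hest x y (hw0.trans hx.1.le) hxy hy.2
      have h2 : ℓ y - ℓ x ≤ ε / (K+1) := by
        have hℓx : ℓ w ≤ ℓ x := hmono w x hw0 hx.1.le hx.2
        have hℓy : ℓ y ≤ L := hub y (hw0.trans hy.1.le) hy.2
        linarith
      have h3 : K * (ε / (K+1)) < ε := by
        rw [mul_div_assoc']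
        rw [div_lt_iff₀ (by positivity)]
        nlinarith
      have h4 : K * (ℓ y - ℓ x) ≤ K * (ε / (K+1)) := by
        apply mul_le_mul_of_nonneg_left h2 hK
      linarith
    rintro _ ⟨x, hx, rfl⟩ _ ⟨y, hy, rfl⟩
    rw [Real.dist_eq]
    rcases le_total x y with h|h
    · rw [abs_sub_comm]; exact key x y hx hy h
    · exact key y x hy hx h
  obtain ⟨l, hl⟩ := CompleteSpace.complete hcauchy
  exact ⟨l, hl⟩

end StmtAux

/-- a finite-length path whose determinant does not converge to zero
converges to a limit in `P_n`. -/
theorem stmt_5 (n : ℕ) (hn : 1 ≤ n) (g : Matrix (Fin n) (Fin n) ℝ) (hg : g ∈ Pn n)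
    (γ : ℝ → Matrix (Fin n) (Fin n) ℝ)
    (hpw : ∀ s : ℝ, 0 < s → s < 1 → PiecewiseC1On γ 0 s)
    (hmem : ∀ t ∈ Set.Ico (0 : ℝ) 1, γ t ∈ Pn n)
    (hlen : ∃ C : ℝ, ∀ s : ℝ, 0 ≤ s → s < 1 → pathLength g γ 0 s ≤ C)
    (hdet : ¬ Filter.Tendsto (fun t => (g⁻¹ * γ t).det)
      (nhdsWithin 1 (Set.Iio 1)) (nhds 0)) :
    ∃ a : Matrix (Fin n) (Fin n) ℝ, a ∈ Pn n ∧
      Filter.Tendsto γ (nhdsWithin 1 (Set.Iio 1)) (nhds a) := by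
  classical
  obtain ⟨C, hC⟩ := hlen
  have hgPD : g.PosDef := hg
  have hmem' : ∀ t ∈ Set.Ico (0:ℝ) 1, (γ t).PosDef := hmem
  set N : ℝ → ℝ := fun t => fiberNorm g (γ t) (pathDeriv γ t) with hNdef
  -- basic positivity facts
  have hdetpos : ∀ t ∈ Set.Ico (0:ℝ) 1, 0 < ((g⁻¹ * γ t)).det := by
    intro t ht
    rw [Matrix.det_mul]
    exact mul_pos hgPD.inv.det_pos (hmem' t ht).det_pos
  have hqd0 : ∀ t ∈ Set.Ico (0:ℝ) 1, 0 < qdet g (γ t) := by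
    intro t ht
    exact Real.rpow_pos_of_pos (hdetpos t ht) _
  have hN0 : ∀ t ∈ Set.Ico (0:ℝ) 1, 0 ≤ N t := by
    intro t ht
    exact mul_nonneg (Real.sqrt_nonneg _) (hqd0 t ht).le
  -- integrability of N
  have hNint : ∀ u v : ℝ, 0 ≤ u → u ≤ v → v < 1 → IntervalIntegrable N volume u v := by
    intro u v h0 huv h1
    rw [intervalIntegrable_iff_integrableOn_Ioc_of_le huv]
    refine (StmtAux.integrableOn_N hpw hmem' (h0.trans huv) h1).mono_set ?_
    exact Set.Ioc_subset_Icc_self.trans (Set.Icc_subset_Icc_left h0)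
  -- the length function
  set ℓ : ℝ → ℝ := fun x => ∫ t in (0:ℝ)..x, N t with hℓdef
  have hadd : ∀ u v : ℝ, 0 ≤ u → u ≤ v → v < 1 →
      (∫ t in u..v, N t) = ℓ v - ℓ u := by
    intro u v h0 huv h1
    have := intervalIntegral.integral_add_adjacent_intervals
      (hNint 0 u le_rfl h0 (lt_of_le_of_lt huv h1)) (hNint u v h0 huv h1)
    simp only [hℓdef]
    linarith
  have hℓmono : ∀ u v : ℝ, 0 ≤ u → u ≤ v → v < 1 → ℓ u ≤ ℓ v := by
    intro u v h0 huv h1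
    have hnn : 0 ≤ ∫ t in u..v, N t :=
      intervalIntegral.integral_nonneg huv fun t ht =>
        hN0 t ⟨h0.trans ht.1, lt_of_le_of_lt ht.2 h1⟩
    have := hadd u v h0 huv h1
    linarith
  have hℓub : ∀ u : ℝ, 0 ≤ u → u < 1 → ℓ u ≤ C := fun u h0 h1 => hC u h0 h1
  set L : ℝ := sSup (ℓ '' Set.Ico 0 1) with hLdef
  have hLne : (ℓ '' Set.Ico 0 1).Nonempty := ⟨ℓ 0, Set.mem_image_of_mem _ (by norm_num)⟩
  have hLbdd : BddAbove (ℓ '' Set.Ico 0 1) := by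
    refine ⟨C, ?_⟩
    rintro _ ⟨x, hx, rfl⟩
    exact hℓub x hx.1 hx.2
  have hℓleL : ∀ u : ℝ, 0 ≤ u → u < 1 → ℓ u ≤ L :=
    fun u h0 h1 => le_csSup hLbdd (Set.mem_image_of_mem _ ⟨h0, h1⟩)
  have happrox : ∀ ε : ℝ, 0 < ε → ∃ w, (0:ℝ) ≤ w ∧ w < 1 ∧ L - ε < ℓ w := by
    intro ε hε
    obtain ⟨_, ⟨x, hx, rfl⟩, hlt⟩ := exists_lt_of_lt_csSup hLne
      (show L - ε < L by linarith)
    exact ⟨x, hx.1, hx.2, hlt⟩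
  -- symmetry of the derivative
  have hsymm : ∀ t ∈ Set.Ioo (0:ℝ) 1, (pathDeriv γ t)ᵀ = pathDeriv γ t := by
    intro t ht
    ext i j
    have hev : (fun x => γ x j i) =ᶠ[𝓝 t] (fun x => γ x i j) := by
      filter_upwards [isOpen_Ioo.mem_nhds ht] with x hx
      have h := StmtAux.real_transpose_of_isHermitian
        (hmem' x ⟨hx.1.le, hx.2⟩).isHermitian
      calc γ x j i = (γ x)ᵀ i j := rfl
        _ = γ x i j := by rw [h]
    simp only [Matrix.transpose_apply, pathDeriv, Matrix.of_apply]
    exact hev.deriv_eq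
  -- continuity of γ on [0,1)
  have hγcont : ContinuousOn γ (Set.Ico 0 1) := by
    intro t ht
    have hs1 : t < (t+1)/2 := by linarith [ht.2]
    have hs2 : (t+1)/2 < 1 := by linarith [ht.2]
    have hs0 : (0:ℝ) < (t+1)/2 := by linarith [ht.1]
    have hcont := (hpw ((t+1)/2) hs0 hs2).1
    refine (hcont.continuousWithinAt ⟨ht.1, hs1.le⟩).mono_of_mem_nhdsWithin ?_
    have : Set.Ico (0:ℝ) 1 ∩ Set.Iic ((t+1)/2) ⊆ Set.Icc 0 ((t+1)/2) :=
      fun x hx => ⟨hx.1.1, hx.2⟩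
    exact Filter.mem_of_superset (inter_mem_nhdsWithin _ (Iic_mem_nhds hs1)) this
  have hqdcont : ContinuousOn (fun t => qdet g (γ t)) (Set.Ico 0 1) := by
    refine ContinuousOn.rpow_const ?_ (fun x _ => Or.inr (by norm_num))
    refine continuousOn_iff_continuous_restrict.mpr ?_
    exact Continuous.matrix_det (continuous_const.matrix_mul
      (continuousOn_iff_continuous_restrict.mp hγcont))
  -- Step A : convergence of qdet
  set δf : ℝ → ℝ := fun t => qdet g (γ t) with hδfdef
  set K₁ : ℝ := Real.sqrt n / 4 with hK₁def
  have hδest : ∀ u v : ℝ, 0 ≤ u → u ≤ v → v < 1 → |δf v - δf u| ≤ K₁ * (ℓ v - ℓ u) := by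
    intro u v hu huv hv
    rw [← hadd u v hu huv hv]
    refine StmtAux.key_estimate hpw N hNdef hNint δf
      (fun t b => (1/4) * qdet g (γ t) * (((γ t)⁻¹ * b)).trace) K₁
      (by positivity) hu huv hv
      (fun t ht => hN0 t ⟨hu.trans ht.1, lt_of_le_of_lt ht.2 hv⟩)
      (hqdcont.mono fun x hx => ⟨hu.trans hx.1, lt_of_le_of_lt hx.2 hv⟩) ?_ ?_
    · intro t ht S b hb
      exact StmtAux.hasDerivWithinAt_qdet hgPD
        (hmem' t ⟨hu.trans ht.1.le, lt_trans ht.2 hv⟩) hb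
    · intro t ht
      have htI : t ∈ Set.Ico (0:ℝ) 1 := ⟨hu.trans ht.1.le, lt_trans ht.2 hv⟩
      have htO : t ∈ Set.Ioo (0:ℝ) 1 := ⟨lt_of_le_of_lt hu ht.1, lt_trans ht.2 hv⟩
      obtain ⟨h0, htr, _⟩ := StmtAux.master (hmem' t htI) (hsymm t htO)
      have hq0 := (hqd0 t htI).le
      calc |(1/4) * qdet g (γ t) * (((γ t)⁻¹ * pathDeriv γ t)).trace|
          = (1/4) * qdet g (γ t) * |(((γ t)⁻¹ * pathDeriv γ t)).trace| := by
            rw [abs_mul, abs_mul, abs_of_nonneg hq0,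
              abs_of_nonneg (by norm_num : (0:ℝ) ≤ 1/4)]
        _ ≤ (1/4) * qdet g (γ t) * (Real.sqrt n * Real.sqrt (trSq (γ t) (pathDeriv γ t))) := by
            apply mul_le_mul_of_nonneg_left htr (by positivity)
        _ = K₁ * N t := by
            show _ = K₁ * (Real.sqrt (trSq (γ t) (pathDeriv γ t)) * qdet g (γ t))
            rw [hK₁def]; ring
  obtain ⟨dinf, hdinf⟩ := StmtAux.tendsto_of_est δf ℓ K₁ L 0 (by positivity) one_pos
    (fun u v hu huv hv => hℓmono u v hu huv hv)
    (fun u hu h1 => hℓleL u hu h1) happrox hδest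
  have hIooMem : Set.Ioo (0:ℝ) 1 ∈ 𝓝[<] (1:ℝ) :=
    Ioo_mem_nhdsLT_of_mem ⟨one_pos, le_refl 1⟩
  have hδnn : 0 ≤ dinf := by
    refine ge_of_tendsto hdinf ?_
    filter_upwards [hIooMem] with t ht
    exact (hqd0 t ⟨ht.1.le, ht.2⟩).le
  have hδpos : 0 < dinf := by
    rcases eq_or_lt_of_le hδnn with he|h
    · exfalso
      apply hdet
      have h4 : Filter.Tendsto (fun t => (δf t)^(4:ℕ)) (𝓝[<] (1:ℝ)) (𝓝 ((dinf)^(4:ℕ))) :=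
        hdinf.pow 4
      rw [← he] at h4
      norm_num at h4
      refine h4.congr' ?_
      filter_upwards [hIooMem] with t ht
      have hx := hdetpos t ⟨ht.1.le, ht.2⟩
      rw [hδfdef]
      show (qdet g (γ t))^(4:ℕ) = (g⁻¹ * γ t).det
      rw [qdet, ← Real.rpow_natCast (((g⁻¹ * γ t)).det ^ ((1:ℝ)/4)) 4,
        ← Real.rpow_mul hx.le]
      norm_num
    · exact h
  -- threshold below which qdet is large
  obtain ⟨a₀, ha₀1, ha₀⟩ := mem_nhdsLT_iff_exists_Ioo_subset.mp
    (hdinf.eventually (lt_mem_nhds (half_lt_self hδpos)))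
  set t₀ : ℝ := max a₀ 0 with ht₀def
  have ht₀0 : 0 ≤ t₀ := le_max_right _ _
  have ht₀1 : t₀ < 1 := max_lt ha₀1 one_pos
  have hδlow : ∀ t ∈ Set.Ioo t₀ 1, dinf/2 < qdet g (γ t) := by
    intro t ht
    exact ha₀ ⟨lt_of_le_of_lt (le_max_left a₀ 0) ht.1, ht.2⟩
  -- Step B : convergence of quadratic forms
  have hupos : ∀ (w : Fin n → ℝ), w ≠ 0 → ∀ t ∈ Set.Ico (0:ℝ) 1,
      0 < w ⬝ᵥ (γ t *ᵥ w) := by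
    intro w hw t ht
    have := (hmem' t ht).dotProduct_mulVec_pos hw
    simpa using this
  have hUall : ∀ w : Fin n → ℝ, ∃ U : ℝ,
      Filter.Tendsto (fun t => w ⬝ᵥ (γ t *ᵥ w)) (𝓝[<] (1:ℝ)) (𝓝 U) ∧ (w ≠ 0 → 0 < U) := by
    intro w
    by_cases hw : w = 0
    · refine ⟨0, ?_, fun h => absurd hw h⟩
      subst hw
      simp only [zero_dotProduct]
      exact tendsto_const_nhds
    · -- the log of the quadratic form
      set uq : ℝ → ℝ := fun t => w ⬝ᵥ (γ t *ᵥ w) with huqdef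
      set W : ℝ → ℝ := fun t => Real.log (uq t) with hWdef
      set K₂ : ℝ := 2 / dinf with hK₂def
      have hK₂0 : 0 ≤ K₂ := by positivity
      have huqcont : ContinuousOn uq (Set.Ico 0 1) := by
        refine continuousOn_iff_continuous_restrict.mpr ?_
        exact continuous_const.dotProduct
          ((continuousOn_iff_continuous_restrict.mp hγcont).matrix_mulVec continuous_const)
      have hWest : ∀ u v : ℝ, t₀ ≤ u → u ≤ v → v < 1 → |W v - W u| ≤ K₂ * (ℓ v - ℓ u) := by
        intro u v hu huv hv
        have hu0 : 0 ≤ u := ht₀0.trans hu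
        rw [← hadd u v hu0 huv hv]
        refine StmtAux.key_estimate hpw N hNdef hNint W
          (fun t b => (w ⬝ᵥ (b *ᵥ w)) / uq t) K₂ hK₂0 hu0 huv hv
          (fun t ht => hN0 t ⟨hu0.trans ht.1, lt_of_le_of_lt ht.2 hv⟩) ?_ ?_ ?_
        · refine ContinuousOn.log ?_ ?_
          · exact huqcont.mono fun x hx => ⟨hu0.trans hx.1, lt_of_le_of_lt hx.2 hv⟩
          · intro x hx
            exact (hupos w hw x ⟨hu0.trans hx.1, lt_of_le_of_lt hx.2 hv⟩).ne'
        · intro t ht S b hb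
          exact (StmtAux.hasDerivWithinAt_quad w hb).log
            (hupos w hw t ⟨hu0.trans ht.1.le, lt_trans ht.2 hv⟩).ne'
        · intro t ht
          have htI : t ∈ Set.Ico (0:ℝ) 1 := ⟨hu0.trans ht.1.le, lt_trans ht.2 hv⟩
          have htO : t ∈ Set.Ioo (0:ℝ) 1 := ⟨lt_of_le_of_lt hu0 ht.1, lt_trans ht.2 hv⟩
          have htT : t ∈ Set.Ioo t₀ 1 := ⟨lt_of_le_of_lt hu ht.1, lt_trans ht.2 hv⟩
          obtain ⟨h0, _, hquad⟩ := StmtAux.master (hmem' t htI) (hsymm t htO)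
          have hup := hupos w hw t htI
          have hqlow := hδlow t htT
          set σ : ℝ := Real.sqrt (trSq (γ t) (pathDeriv γ t)) with hσdef
          have hσ0 : 0 ≤ σ := Real.sqrt_nonneg _
          calc |(w ⬝ᵥ (pathDeriv γ t *ᵥ w)) / uq t|
              = |w ⬝ᵥ (pathDeriv γ t *ᵥ w)| / uq t := by
                rw [abs_div, abs_of_pos hup]
            _ ≤ (σ * uq t) / uq t := by
                rw [div_le_div_iff_of_pos_right hup]
                exact hquad w
            _ = σ := mul_div_cancel_right₀ σ hup.ne'
            _ ≤ K₂ * N t := by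
                have hNt : N t = σ * qdet g (γ t) := rfl
                rw [hNt, hK₂def]
                have h1 : (1:ℝ) ≤ qdet g (γ t) * (2/dinf) := by
                  rw [mul_comm, div_mul_eq_mul_div, le_div_iff₀ hδpos]
                  linarith
                calc σ = σ * 1 := by ring
                  _ ≤ σ * (qdet g (γ t) * (2/dinf)) := by
                      exact mul_le_mul_of_nonneg_left h1 hσ0
                  _ = 2/dinf * (σ * qdet g (γ t)) := by ring
      obtain ⟨lW, hlW⟩ := StmtAux.tendsto_of_est W ℓ K₂ L t₀ hK₂0 ht₀1
        (fun u v hu huv hv => hℓmono u v (ht₀0.trans hu) huv hv)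
        (fun u hu h1 => hℓleL u (ht₀0.trans hu) h1)
        (fun ε hε => by
          obtain ⟨x, hx0, hx1, hxl⟩ := happrox ε hε
          refine ⟨max x t₀, le_max_right _ _, max_lt hx1 ht₀1, ?_⟩
          exact lt_of_lt_of_le hxl
            (hℓmono x (max x t₀) hx0 (le_max_left _ _) (max_lt hx1 ht₀1)))
        hWest
      refine ⟨Real.exp lW, ?_, fun _ => Real.exp_pos lW⟩
      have hexp : Filter.Tendsto (fun t => Real.exp (W t)) (𝓝[<] (1:ℝ)) (𝓝 (Real.exp lW)) :=
        (Real.continuous_exp.tendsto lW).comp hlW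
      refine hexp.congr' ?_
      filter_upwards [Ioo_mem_nhdsLT_of_mem (show (1:ℝ) ∈ Set.Ioc t₀ 1 from ⟨ht₀1, le_refl 1⟩)]
        with t ht
      exact Real.exp_log (hupos w hw t ⟨ht₀0.trans ht.1.le, ht.2⟩)
  choose U hUt hUpos using hUall
  -- the limit matrix
  set e : Fin n → (Fin n → ℝ) := fun i => Pi.single i 1 with hedef
  set A : Matrix (Fin n) (Fin n) ℝ :=
    Matrix.of (fun i j => (U (e i + e j) - U (e i) - U (e j))/2) with hAdef
  have hpolar : ∀ (B : Matrix (Fin n) (Fin n) ℝ), Bᵀ = B → ∀ i j : Fin n,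
      ((e i + e j) ⬝ᵥ (B *ᵥ (e i + e j)) - e i ⬝ᵥ (B *ᵥ e i) - e j ⬝ᵥ (B *ᵥ e j))/2
        = B i j := by
    intro B hB i j
    have hji : B j i = B i j := by
      calc B j i = Bᵀ i j := rfl
        _ = B i j := by rw [hB]
    simp only [hedef, Matrix.mulVec_add, dotProduct_add, add_dotProduct,
      Matrix.mulVec_single, single_dotProduct, mul_one, one_mul,
      MulOpposite.op_one, one_smul, Matrix.col_apply, Pi.add_apply]
    linarith
  have hentry : ∀ i j : Fin n,
      Filter.Tendsto (fun t => γ t i j) (𝓝[<] (1:ℝ)) (𝓝 (A i j)) := by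
    intro i j
    have h3 := (((hUt (e i + e j)).sub (hUt (e i))).sub (hUt (e j))).div_const 2
    refine h3.congr' ?_
    filter_upwards [hIooMem] with t ht
    have hsymmγ : (γ t)ᵀ = γ t :=
      StmtAux.real_transpose_of_isHermitian (hmem' t ⟨ht.1.le, ht.2⟩).isHermitian
    exact hpolar (γ t) hsymmγ i j
  have hconv : Filter.Tendsto γ (𝓝[<] (1:ℝ)) (𝓝 A) := by
    refine tendsto_pi_nhds.2 ?_
    intro i
    rw [tendsto_pi_nhds]
    intro j
    exact hentry i j
  -- the limit is positive definite
  have hquadcont : ∀ x : Fin n → ℝ, Continuous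
      (fun B : Matrix (Fin n) (Fin n) ℝ => x ⬝ᵥ (B *ᵥ x)) := by
    intro x
    exact continuous_const.dotProduct (continuous_id.matrix_mulVec continuous_const)
  have hAq : ∀ x : Fin n → ℝ, x ⬝ᵥ (A *ᵥ x) = U x := by
    intro x
    have h1 : Filter.Tendsto (fun t => x ⬝ᵥ (γ t *ᵥ x)) (𝓝[<] (1:ℝ)) (𝓝 (x ⬝ᵥ (A *ᵥ x))) :=
      ((hquadcont x).tendsto A).comp hconv
    exact tendsto_nhds_unique h1 (hUt x)
  have hApd : A.PosDef := by
    refine Matrix.PosDef.of_dotProduct_mulVec_pos ?_ ?_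
    · show Aᴴ = A
      ext i j
      simp only [Matrix.conjTranspose_apply, star_trivial]
      show A j i = A i j
      rw [hAdef]
      simp only [Matrix.of_apply]
      rw [add_comm (e j) (e i)]
      ring
    · intro x hx
      have hsx : star x = x := by
        funext i; exact star_trivial _
      rw [hsx, hAq x]
      exact hUpos x hx
  exact ⟨A, hApd, hconv⟩

end
end

section
/- Let a₀ ∈ P_n and let b be a symmetric n×n matrix, with ω := (n·tr_{a₀}(b_T²))^{1/2}/4. Then tr_{a₀}(ψ(b)²) = (16/n)·( e^{tr_{a₀}(b)/2} − 2·e^{tr_{a₀}(b)/4}·cos(ω) + 1 ). Consequently, with a₁ := a₀·exp(a₀⁻¹b), one has ‖ψ(b)‖²_{a₀} = (16/n)·( (det(g⁻¹a₀))^{1/2} − 2·(det(g⁻¹a₀))^{1/4}·(det(g⁻¹a₁))^{1/4}·cos(ω) + (det(g⁻¹a₁))^{1/2} ). -/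
open Matrix Real MeasureTheory Filter

noncomputable section

section AuxLemmas

variable {n : ℕ}

private lemma posDef_inv_mul {a : Matrix (Fin n) (Fin n) ℝ} (ha : a.PosDef) :
    a⁻¹ * a = 1 :=
  Matrix.nonsing_inv_mul a ((Matrix.isUnit_iff_isUnit_det a).mp ha.isUnit)

private lemma posDef_mul_inv {a : Matrix (Fin n) (Fin n) ℝ} (ha : a.PosDef) :
    a * a⁻¹ = 1 :=
  Matrix.mul_nonsing_inv a ((Matrix.isUnit_iff_isUnit_det a).mp ha.isUnit)

private lemma trSq_zero (a : Matrix (Fin n) (Fin n) ℝ) : trSq a 0 = 0 := by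
  simp [trSq]

private lemma trA_traceless {a b : Matrix (Fin n) (Fin n) ℝ} (ha : a.PosDef) (hn : 1 ≤ n) :
    (a⁻¹ * tracelessPart a b).trace = 0 := by
  have hn0 : (n : ℝ) ≠ 0 := by positivity
  rw [tracelessPart, Matrix.mul_sub, Matrix.mul_smul, posDef_inv_mul ha]
  rw [Matrix.trace_sub, Matrix.trace_smul, Matrix.trace_one]
  simp only [Fintype.card_fin, smul_eq_mul]
  field_simp [trA]
  simp [trA]

private lemma trSq_smul_self {a : Matrix (Fin n) (Fin n) ℝ} (ha : a.PosDef) (α : ℝ) :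
    trSq a (α • a) = α ^ 2 * n := by
  rw [trSq, Matrix.mul_smul, posDef_inv_mul ha]
  simp [Matrix.smul_mul, Matrix.trace_smul, Matrix.trace_one, Fintype.card_fin]
  ring

private lemma trSq_smul_add {a : Matrix (Fin n) (Fin n) ℝ} (ha : a.PosDef)
    (c : Matrix (Fin n) (Fin n) ℝ) (α β : ℝ) (hc : (a⁻¹ * c).trace = 0) :
    trSq a (α • a + β • c) = α ^ 2 * n + β ^ 2 * trSq a c := by
  have h1 : a⁻¹ * (α • a + β • c) = α • (1 : Matrix (Fin n) (Fin n) ℝ) + β • (a⁻¹ * c) := by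
    rw [Matrix.mul_add, Matrix.mul_smul, Matrix.mul_smul, posDef_inv_mul ha]
  rw [trSq, h1]
  simp only [Matrix.add_mul, Matrix.mul_add, Matrix.smul_mul, Matrix.mul_smul,
    Matrix.one_mul, Matrix.mul_one, Matrix.trace_add, Matrix.trace_smul, Matrix.trace_one,
    Fintype.card_fin, hc, smul_eq_mul, smul_smul, trSq]
  ring

open scoped MatrixOrder in
private lemma sqrt_facts {a : Matrix (Fin n) (Fin n) ℝ} (ha : a.PosDef) :
    ∃ M : Matrix (Fin n) (Fin n) ℝ, M * M = a⁻¹ ∧ Mᵀ = M ∧ IsUnit M.det := by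
  have hinv : (a⁻¹).PosDef := ha.inv
  have hps := hinv.posSemidef
  refine ⟨CFC.sqrt (a⁻¹), CFC.sqrt_mul_sqrt_self _ hps.nonneg, ?_, ?_⟩
  · rw [← Matrix.conjTranspose_eq_transpose_of_trivial]
    exact (CFC.sqrt_nonneg (a⁻¹)).posSemidef.1
  · have h1 : (CFC.sqrt (a⁻¹)).det * (CFC.sqrt (a⁻¹)).det = (a⁻¹).det := by
      rw [← Matrix.det_mul, CFC.sqrt_mul_sqrt_self _ hps.nonneg]
    have h2 : (a⁻¹).det ≠ 0 := hinv.det_pos.ne'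
    refine isUnit_iff_ne_zero.mpr fun h0 => h2 ?_
    rw [← h1, h0, mul_zero]

private lemma trSq_conj {a : Matrix (Fin n) (Fin n) ℝ} (ha : a.PosDef)
    (c : Matrix (Fin n) (Fin n) ℝ) {M : Matrix (Fin n) (Fin n) ℝ}
    (hMM : M * M = a⁻¹) (hMd : IsUnit M.det) :
    trSq a c = ((M * c * M) * (M * c * M)).trace := by
  have hconj : a⁻¹ * c = M * (M * c * M) * M⁻¹ := by
    rw [show M * (M * c * M) * M⁻¹ = (M * M) * c * (M * M⁻¹) from by noncomm_ring,
      Matrix.mul_nonsing_inv M hMd, hMM, Matrix.mul_one]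
  rw [trSq, hconj]
  set C := M * c * M
  have h2 : M * C * M⁻¹ * (M * C * M⁻¹) = M * C * (M⁻¹ * M) * C * M⁻¹ := by noncomm_ring
  rw [h2, Matrix.nonsing_inv_mul M hMd, Matrix.mul_one]
  have h3 : M⁻¹ * (M * C * C) = C * C := by
    rw [show M⁻¹ * (M * C * C) = (M⁻¹ * M) * (C * C) from by noncomm_ring,
      Matrix.nonsing_inv_mul M hMd, Matrix.one_mul]
  rw [Matrix.trace_mul_comm, h3]

private lemma trSq_pos {a : Matrix (Fin n) (Fin n) ℝ} (ha : a.PosDef)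
    {c : Matrix (Fin n) (Fin n) ℝ} (hc : cᵀ = c) (hc0 : c ≠ 0) :
    0 < trSq a c := by
  obtain ⟨M, hMM, hMs, hMd⟩ := sqrt_facts ha
  rw [trSq_conj ha c hMM hMd]
  set C := M * c * M with hC
  have hCs : Cᵀ = C := by
    rw [hC, Matrix.transpose_mul, Matrix.transpose_mul, hMs, hc, Matrix.mul_assoc]
  have hC0 : C ≠ 0 := by
    intro h0
    apply hc0
    have : M⁻¹ * C * M⁻¹ = c := by
      rw [hC, ← Matrix.mul_assoc, ← Matrix.mul_assoc, Matrix.nonsing_inv_mul M hMd,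
        Matrix.one_mul, Matrix.mul_assoc, Matrix.mul_nonsing_inv M hMd, Matrix.mul_one]
    rw [← this, h0, Matrix.mul_zero, Matrix.zero_mul]
  have htr : (C * C).trace = ∑ i, ∑ j, (C i j) ^ 2 := by
    rw [Matrix.trace]
    refine Finset.sum_congr rfl fun i _ => ?_
    rw [Matrix.diag_apply, Matrix.mul_apply]
    refine Finset.sum_congr rfl fun j _ => ?_
    have hSym : C i j = C j i := by
      have h := congrFun (congrFun hCs j) i
      rwa [Matrix.transpose_apply] at h
    rw [← hSym, sq]
  rw [htr]
  obtain ⟨i, j, hij⟩ : ∃ i j, C i j ≠ 0 := by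
    by_contra h
    push_neg at h
    exact hC0 (Matrix.ext fun i j => h i j)
  refine Finset.sum_pos' (fun i _ => Finset.sum_nonneg fun j _ => sq_nonneg _) ⟨i, Finset.mem_univ i, ?_⟩
  exact Finset.sum_pos' (fun j _ => sq_nonneg _) ⟨j, Finset.mem_univ j, sq_pos_iff.mpr hij⟩

private lemma det_exp_hermitian (S : Matrix (Fin n) (Fin n) ℝ) (hS : S.IsHermitian) :
    (NormedSpace.exp S).det = Real.exp S.trace := by
  set U : Matrix (Fin n) (Fin n) ℝ := (hS.eigenvectorUnitary : Matrix (Fin n) (Fin n) ℝ)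
  set v : Fin n → ℝ := hS.eigenvalues
  have hsu : star U * U = 1 := Unitary.star_mul_self_of_mem hS.eigenvectorUnitary.2
  have hus : U * star U = 1 := Unitary.mul_star_self_of_mem hS.eigenvectorUnitary.2
  have hU : IsUnit U := ⟨⟨U, star U, hus, hsu⟩, rfl⟩
  have hUinv : U⁻¹ = star U := Matrix.inv_eq_right_inv hus
  have hspec : S = U * Matrix.diagonal v * U⁻¹ := by
    rw [hUinv]
    have := hS.spectral_theorem
    simpa [RCLike.ofReal_real_eq_id] using this
  have htr : S.trace = ∑ i, v i := by
    rw [hspec, hUinv, Matrix.trace_mul_cycle, hsu, Matrix.one_mul, Matrix.trace_diagonal]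
  have hdet : (NormedSpace.exp S).det = ∏ i, Real.exp (v i) := by
    conv_lhs => rw [hspec]
    rw [Matrix.exp_conj U _ hU, Matrix.det_conj hU, Matrix.exp_diagonal, Matrix.det_diagonal]
    exact Finset.prod_congr rfl fun i _ => by rw [Pi.coe_exp, ← Real.exp_eq_exp_ℝ]
  rw [hdet, htr, ← Real.exp_sum]

private lemma det_exp_inv_mul {a : Matrix (Fin n) (Fin n) ℝ} (ha : a.PosDef)
    {b : Matrix (Fin n) (Fin n) ℝ} (hb : bᵀ = b) :
    (NormedSpace.exp (a⁻¹ * b)).det = Real.exp (trA a b) := by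
  obtain ⟨M, hMM, hMs, hMd⟩ := sqrt_facts ha
  set S := M * b * M with hSdef
  have hSh : S.IsHermitian := by
    rw [Matrix.IsHermitian, Matrix.conjTranspose_eq_transpose_of_trivial, hSdef,
      Matrix.transpose_mul, Matrix.transpose_mul, hMs, hb, Matrix.mul_assoc]
  have hconj : a⁻¹ * b = M * S * M⁻¹ := by
    rw [hSdef, show M * (M * b * M) * M⁻¹ = (M * M) * b * (M * M⁻¹) from by noncomm_ring,
      Matrix.mul_nonsing_inv M hMd, hMM, Matrix.mul_one]
  have htr : S.trace = trA a b := by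
    rw [hSdef, Matrix.trace_mul_cycle, hMM]; rfl
  rw [hconj, Matrix.exp_conj M S ((Matrix.isUnit_iff_isUnit_det M).mpr hMd),
    Matrix.det_conj ((Matrix.isUnit_iff_isUnit_det M).mpr hMd), det_exp_hermitian S hSh, htr]

end AuxLemmas


private lemma psi_trSq {n : ℕ} (hn : 1 ≤ n) {a b : Matrix (Fin n) (Fin n) ℝ}
    (ha : a.PosDef) (hb : bᵀ = b) :
    trSq a (psiMap a b) =
      16 / n * (Real.exp (trA a b / 2) - 2 * Real.exp (trA a b / 4) *
        Real.cos (Real.sqrt ((n : ℝ) * trSq a (tracelessPart a b)) / 4) + 1) := by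
  have hn0 : (n : ℝ) ≠ 0 := Nat.cast_ne_zero.mpr (by omega)
  have haT : aᵀ = a := by
    rw [← Matrix.conjTranspose_eq_transpose_of_trivial]; exact ha.1
  have hbTs : (tracelessPart a b)ᵀ = tracelessPart a b := by
    rw [tracelessPart, Matrix.transpose_sub, Matrix.transpose_smul, haT, hb]
  have hX2 : Real.exp (trA a b / 4) ^ 2 = Real.exp (trA a b / 2) := by
    rw [← Real.exp_nat_mul]; congr 1; push_cast; ring
  by_cases h0 : tracelessPart a b = 0
  · have hψ : psiMap a b = ((4 / (n : ℝ)) * (Real.exp (trA a b / 4) - 1)) • a := by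
      simp only [psiMap]; rw [if_pos h0]
    rw [hψ, trSq_smul_self ha, h0, trSq_zero, mul_zero, Real.sqrt_zero, zero_div,
      Real.cos_zero, ← hX2]
    field_simp
    ring
  · have hs : 0 < trSq a (tracelessPart a b) := trSq_pos ha hbTs h0
    set s := trSq a (tracelessPart a b) with hsdef
    set r := Real.sqrt ((n : ℝ) * s) with hrdef
    have hr2 : r ^ 2 = (n : ℝ) * s := Real.sq_sqrt (by positivity)
    have hrpos : 0 < r := Real.sqrt_pos.mpr (by positivity)
    set x := Real.exp (trA a b / 4) with hxdef
    set ω := r / 4 with hωdef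
    have hψ : psiMap a b = ((4 / (n : ℝ)) * (x * Real.cos ω - 1)) • a +
        ((4 / r) * x * Real.sin ω) • tracelessPart a b := by
      simp only [psiMap]; rw [if_neg h0]
    rw [hψ, trSq_smul_add ha _ _ _ (trA_traceless ha hn), ← hsdef, ← hX2]
    have e0 : (4 / (n : ℝ) * (x * Real.cos ω - 1)) ^ 2 * (n : ℝ) =
        16 / n * (x * Real.cos ω - 1) ^ 2 := by field_simp; ring
    have e1 : (4 / r * x * Real.sin ω) ^ 2 * s = 16 / n * (x * Real.sin ω) ^ 2 := by
      have h2 : (r ^ 2 * (n : ℝ)) ≠ 0 := by positivity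
      refine mul_right_cancel₀ h2 ?_
      field_simp
      rw [hr2]
      ring
    rw [e0, e1]
    linear_combination (16 / (n : ℝ) * x ^ 2) * Real.sin_sq_add_cos_sq ω

/-- the norm of `ψ(b)`. -/
theorem stmt_9 (n : ℕ) (hn : 1 ≤ n) (g : Matrix (Fin n) (Fin n) ℝ) (hg : g ∈ Pn n)
    (a₀ : Matrix (Fin n) (Fin n) ℝ) (ha₀ : a₀ ∈ Pn n)
    (b : Matrix (Fin n) (Fin n) ℝ) (hb : b.IsSymm) :
    trSq a₀ (psiMap a₀ b) =
      16 / n * (Real.exp (trA a₀ b / 2) -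
        2 * Real.exp (trA a₀ b / 4) *
          Real.cos (Real.sqrt ((n : ℝ) * trSq a₀ (tracelessPart a₀ b)) / 4) + 1) ∧
    fiberNorm g a₀ (psiMap a₀ b) ^ 2 =
      16 / n * (((g⁻¹ * a₀).det) ^ ((1 : ℝ) / 2) -
        2 * qdet g a₀ * qdet g (expAt a₀ b) *
          Real.cos (Real.sqrt ((n : ℝ) * trSq a₀ (tracelessPart a₀ b)) / 4) +
        ((g⁻¹ * expAt a₀ b).det) ^ ((1 : ℝ) / 2)) := by
  have ha : a₀.PosDef := ha₀
  have hgp : g.PosDef := hg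
  have hb' : bᵀ = b := hb
  have hn0 : (n : ℝ) ≠ 0 := Nat.cast_ne_zero.mpr (by omega)
  have hnpos : (0 : ℝ) < n := Nat.cast_pos.mpr hn
  have key := psi_trSq hn ha hb'
  refine ⟨key, ?_⟩
  set ω := Real.sqrt ((n : ℝ) * trSq a₀ (tracelessPart a₀ b)) / 4 with hω
  set X := Real.exp (trA a₀ b / 4) with hX
  have hXpos : 0 < X := by rw [hX]; exact Real.exp_pos _
  have hX2 : X ^ 2 = Real.exp (trA a₀ b / 2) := by
    rw [hX, ← Real.exp_nat_mul]; congr 1; push_cast; ring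
  have hT0 : 0 ≤ trSq a₀ (psiMap a₀ b) := by
    rw [key, ← hX2]
    refine mul_nonneg (div_nonneg (by norm_num) hnpos.le) ?_
    nlinarith [sq_nonneg (X - 1), Real.cos_le_one ω]
  have hd : 0 < (g⁻¹ * a₀).det := by
    rw [Matrix.det_mul]; exact mul_pos hgp.inv.det_pos ha.det_pos
  set d := (g⁻¹ * a₀).det with hddef
  have hdet1 : (g⁻¹ * expAt a₀ b).det = d * Real.exp (trA a₀ b) := by
    rw [expAt, ← Matrix.mul_assoc, Matrix.det_mul, det_exp_inv_mul ha hb', hddef]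
  have hq2 : qdet g a₀ ^ 2 = d ^ ((1 : ℝ) / 2) := by
    rw [qdet, ← Real.rpow_natCast (d ^ ((1 : ℝ) / 4)) 2, ← Real.rpow_mul hd.le]
    push_cast
    norm_num
  have hqa1 : qdet g (expAt a₀ b) = d ^ ((1 : ℝ) / 4) * X := by
    rw [qdet, hdet1, Real.mul_rpow hd.le (Real.exp_pos _).le, ← Real.exp_mul,
      show trA a₀ b * (1 / 4) = trA a₀ b / 4 from by ring, ← hX]
  have hd1half : ((g⁻¹ * expAt a₀ b).det) ^ ((1 : ℝ) / 2) = d ^ ((1 : ℝ) / 2) * X ^ 2 := by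
    rw [hdet1, Real.mul_rpow hd.le (Real.exp_pos _).le, ← Real.exp_mul,
      show trA a₀ b * (1 / 2) = trA a₀ b / 2 from by ring, ← hX2]
  have hqd : qdet g a₀ = d ^ ((1 : ℝ) / 4) := by rw [qdet, ← hddef]
  rw [fiberNorm, mul_pow, Real.sq_sqrt hT0, key, hd1half, hqa1, hqd, ← hq2, hqd, ← hX2]
  ring

end
end
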